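/- arXiv:1612.00191 — 6 statements merged into one kernel-verified Lean document; each statement's English description precedes it below -/
import Mathlib

section
/- Let Z₂(ℝ) = {([w:x:y:z],[u:v]) ∈ ℙ³(ℝ)×ℙ¹(ℝ) : wz = x²+y², uz = vw}. The maps α₁([w:x:y:z],[u:v]) = ([z:−x:y:w],[v:u]) and α₂([w:x:y:z],[u:v]) = ([w:−x:y:z],[u:v]) are well-defined bijections of Z₂(ℝ) satisfying α₁² = α₂² = (α₁α₂)² = id, and α₁, α₂ and α₁α₂ are all different from the identity; consequently α₁ and α₂ generate a subgroup of the symmetric group of Z₂(ℝ) isomorphic to the Klein four-group ℤ/2ℤ × ℤ/2ℤ. -/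
/-- The set of real points of the del Pezzo surface
`X₂ = {([w:x:y:z],[u:v]) ∈ ℙ³ × ℙ¹ : wz = x² + y², uz = vw}`. -/
def Z2Real : Set (Projectivization ℝ (Fin 4 → ℝ) × Projectivization ℝ (Fin 2 → ℝ)) :=
  {P | ∃ (w x y z u v : ℝ) (h1 : (![w, x, y, z] : Fin 4 → ℝ) ≠ 0)
      (h2 : (![u, v] : Fin 2 → ℝ) ≠ 0),
      P.1 = Projectivization.mk ℝ ![w, x, y, z] h1 ∧
      P.2 = Projectivization.mk ℝ ![u, v] h2 ∧
      w * z = x ^ 2 + y ^ 2 ∧ u * z = v * w}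

noncomputable section KleinAux
set_option linter.unreachableTactic false
set_option linter.unnecessarySeqFocus false
set_option linter.unusedTactic false

/-- The linear map `(w,x,y,z) ↦ (z,-x,y,w)` underlying `α₁` on the `ℙ³` factor. -/
def L1 : (Fin 4 → ℝ) →ₗ[ℝ] (Fin 4 → ℝ) where
  toFun v := ![v 3, -v 1, v 2, v 0]
  map_add' a b := by funext i; fin_cases i <;> simp <;> ring
  map_smul' c a := by funext i; fin_cases i <;> simp <;> ring

/-- The linear map `(w,x,y,z) ↦ (w,-x,y,z)` underlying `α₂` on the `ℙ³` factor. -/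
def L2 : (Fin 4 → ℝ) →ₗ[ℝ] (Fin 4 → ℝ) where
  toFun v := ![v 0, -v 1, v 2, v 3]
  map_add' a b := by funext i; fin_cases i <;> simp <;> ring
  map_smul' c a := by funext i; fin_cases i <;> simp <;> ring

/-- The linear map `(u,v) ↦ (v,u)` underlying `α₁` on the `ℙ¹` factor. -/
def M1 : (Fin 2 → ℝ) →ₗ[ℝ] (Fin 2 → ℝ) where
  toFun v := ![v 1, v 0]
  map_add' a b := by funext i; fin_cases i <;> simp
  map_smul' c a := by funext i; fin_cases i <;> simp

lemma L1_apply (w x y z : ℝ) : L1 ![w, x, y, z] = ![z, -x, y, w] := by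
  funext i; fin_cases i <;> simp [L1]

lemma L2_apply (w x y z : ℝ) : L2 ![w, x, y, z] = ![w, -x, y, z] := by
  funext i; fin_cases i <;> simp [L2]

lemma M1_apply (u v : ℝ) : M1 ![u, v] = ![v, u] := by
  funext i; fin_cases i <;> simp [M1]

lemma L1_invol : Function.Involutive L1 := by
  intro v; funext i; fin_cases i <;> simp [L1]

lemma L2_invol : Function.Involutive L2 := by
  intro v; funext i; fin_cases i <;> simp [L2]

lemma M1_invol : Function.Involutive M1 := by
  intro v; funext i; fin_cases i <;> simp [M1]

lemma mk4_congr {v v' : Fin 4 → ℝ} (h : v ≠ 0) (h' : v' ≠ 0) (e : v = v') :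
    Projectivization.mk ℝ v h = Projectivization.mk ℝ v' h' := by subst e; rfl

lemma mk2_congr {v v' : Fin 2 → ℝ} (h : v ≠ 0) (h' : v' ≠ 0) (e : v = v') :
    Projectivization.mk ℝ v h = Projectivization.mk ℝ v' h' := by subst e; rfl

/-- underlying map of `α₁` on the ambient product of projective spaces -/
def G1 (p : Projectivization ℝ (Fin 4 → ℝ) × Projectivization ℝ (Fin 2 → ℝ)) :
    Projectivization ℝ (Fin 4 → ℝ) × Projectivization ℝ (Fin 2 → ℝ) :=
  (Projectivization.map L1 L1_invol.injective p.1,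
   Projectivization.map M1 M1_invol.injective p.2)

/-- underlying map of `α₂` on the ambient product of projective spaces -/
def G2 (p : Projectivization ℝ (Fin 4 → ℝ) × Projectivization ℝ (Fin 2 → ℝ)) :
    Projectivization ℝ (Fin 4 → ℝ) × Projectivization ℝ (Fin 2 → ℝ) :=
  (Projectivization.map L2 L2_invol.injective p.1, p.2)

lemma ne_zero_of_eq {v v' : Fin 4 → ℝ} (f : (Fin 4 → ℝ) →ₗ[ℝ] (Fin 4 → ℝ))
    (hf : Function.Injective f) (h : v ≠ 0) (e : f v = v') : v' ≠ 0 := by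
  rintro rfl
  exact h (hf (by simp [e]))

lemma ne_zero_of_eq2 {v v' : Fin 2 → ℝ} (f : (Fin 2 → ℝ) →ₗ[ℝ] (Fin 2 → ℝ))
    (hf : Function.Injective f) (h : v ≠ 0) (e : f v = v') : v' ≠ 0 := by
  rintro rfl
  exact h (hf (by simp [e]))

lemma G1_mk {w x y z u v : ℝ} (h1 : (![w, x, y, z] : Fin 4 → ℝ) ≠ 0)
    (h2 : (![u, v] : Fin 2 → ℝ) ≠ 0) :
    G1 (Projectivization.mk ℝ ![w, x, y, z] h1, Projectivization.mk ℝ ![u, v] h2) =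
      (Projectivization.mk ℝ ![z, -x, y, w]
        (ne_zero_of_eq L1 L1_invol.injective h1 (L1_apply w x y z)),
       Projectivization.mk ℝ ![v, u]
        (ne_zero_of_eq2 M1 M1_invol.injective h2 (M1_apply u v))) := by
  simp only [G1, Projectivization.map_mk]
  exact Prod.ext (mk4_congr _ _ (L1_apply w x y z)) (mk2_congr _ _ (M1_apply u v))

lemma G2_mk {w x y z u v : ℝ} (h1 : (![w, x, y, z] : Fin 4 → ℝ) ≠ 0)
    (h2 : (![u, v] : Fin 2 → ℝ) ≠ 0) :
    G2 (Projectivization.mk ℝ ![w, x, y, z] h1, Projectivization.mk ℝ ![u, v] h2) =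
      (Projectivization.mk ℝ ![w, -x, y, z]
        (ne_zero_of_eq L2 L2_invol.injective h1 (L2_apply w x y z)),
       Projectivization.mk ℝ ![u, v] h2) := by
  simp only [G2, Projectivization.map_mk]
  exact Prod.ext (mk4_congr _ _ (L2_apply w x y z)) rfl

lemma G1_mem {p} (hp : p ∈ Z2Real) : G1 p ∈ Z2Real := by
  obtain ⟨w, x, y, z, u, v, h1, h2, e1, e2, hq, hl⟩ := hp
  have : p = (Projectivization.mk ℝ ![w, x, y, z] h1, Projectivization.mk ℝ ![u, v] h2) :=
    Prod.ext e1 e2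
  rw [this, G1_mk]
  exact ⟨z, -x, y, w, v, u, _, _, rfl, rfl, by ring_nf; linarith [hq], by linarith [hl]⟩

lemma G2_mem {p} (hp : p ∈ Z2Real) : G2 p ∈ Z2Real := by
  obtain ⟨w, x, y, z, u, v, h1, h2, e1, e2, hq, hl⟩ := hp
  have : p = (Projectivization.mk ℝ ![w, x, y, z] h1, Projectivization.mk ℝ ![u, v] h2) :=
    Prod.ext e1 e2
  rw [this, G2_mk]
  exact ⟨w, -x, y, z, u, v, _, _, rfl, rfl, by ring_nf; linarith [hq], hl⟩

/-- `α₁` as a self-map of `Z₂(ℝ)`. -/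
def F1 (p : Z2Real) : Z2Real := ⟨G1 p.1, G1_mem p.2⟩

/-- `α₂` as a self-map of `Z₂(ℝ)`. -/
def F2 (p : Z2Real) : Z2Real := ⟨G2 p.1, G2_mem p.2⟩

lemma F1_invol : Function.Involutive F1 := by
  rintro ⟨p, hp⟩
  obtain ⟨w, x, y, z, u, v, h1, h2, e1, e2, hq, hl⟩ := hp
  have hpe : p = (Projectivization.mk ℝ ![w, x, y, z] h1, Projectivization.mk ℝ ![u, v] h2) :=
    Prod.ext e1 e2
  subst hpe
  apply Subtype.ext
  show G1 (G1 _) = _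
  rw [G1_mk, G1_mk]
  refine Prod.ext (mk4_congr _ _ ?_) (mk2_congr _ _ ?_) <;> · funext i; fin_cases i <;> simp

lemma F2_invol : Function.Involutive F2 := by
  rintro ⟨p, hp⟩
  obtain ⟨w, x, y, z, u, v, h1, h2, e1, e2, hq, hl⟩ := hp
  have hpe : p = (Projectivization.mk ℝ ![w, x, y, z] h1, Projectivization.mk ℝ ![u, v] h2) :=
    Prod.ext e1 e2
  subst hpe
  apply Subtype.ext
  show G2 (G2 _) = _
  rw [G2_mk, G2_mk]
  refine Prod.ext (mk4_congr _ _ ?_) rfl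
  funext i; fin_cases i <;> simp

section Klein

variable {G : Type*} [Group G]

lemma pow_val_add (β : G) (hβ : β ^ 2 = 1) (a c : ZMod 2) :
    β ^ ((a + c).val) = β ^ a.val * β ^ c.val := by
  have hm : β * β = 1 := by rw [← sq]; exact hβ
  rcases (by decide : ∀ c : ZMod 2, c = 0 ∨ c = 1) a with rfl | rfl <;>
    rcases (by decide : ∀ c : ZMod 2, c = 0 ∨ c = 1) c with rfl | rfl <;>
    simp [show ((0:ZMod 2) + 0).val = 0 from rfl, show ((0:ZMod 2) + 1).val = 1 from rfl,
      show ((1:ZMod 2) + 0).val = 1 from rfl, show ((1:ZMod 2) + 1).val = 0 from rfl,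
      show ((0:ZMod 2)).val = 0 from rfl, show ((1:ZMod 2)).val = 1 from rfl, hm]

/-- The homomorphism from the Klein four-group generated by two commuting involutions. -/
def kleinHom (β γ : G) (hβ : β ^ 2 = 1) (hγ : γ ^ 2 = 1) (hc : Commute β γ) :
    Multiplicative (ZMod 2 × ZMod 2) →* G where
  toFun g := β ^ ((Multiplicative.toAdd g).1.val) * γ ^ ((Multiplicative.toAdd g).2.val)
  map_one' := by
    simp [show ((Multiplicative.toAdd (1 : Multiplicative (ZMod 2 × ZMod 2))).1.val) = 0 from rfl,
      show ((Multiplicative.toAdd (1 : Multiplicative (ZMod 2 × ZMod 2))).2.val) = 0 from rfl]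
  map_mul' g h := by
    show β ^ ((Multiplicative.toAdd (g * h)).1.val) * γ ^ ((Multiplicative.toAdd (g * h)).2.val) =
      β ^ ((Multiplicative.toAdd g).1.val) * γ ^ ((Multiplicative.toAdd g).2.val) *
        (β ^ ((Multiplicative.toAdd h).1.val) * γ ^ ((Multiplicative.toAdd h).2.val))
    have h1 : (Multiplicative.toAdd (g * h)).1 =
        (Multiplicative.toAdd g).1 + (Multiplicative.toAdd h).1 := rfl
    have h2 : (Multiplicative.toAdd (g * h)).2 =
        (Multiplicative.toAdd g).2 + (Multiplicative.toAdd h).2 := rfl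
    rw [h1, h2, pow_val_add β hβ, pow_val_add γ hγ]
    have hcom : Commute (β ^ (Multiplicative.toAdd h).1.val)
        (γ ^ (Multiplicative.toAdd g).2.val) := hc.pow_pow _ _
    calc β ^ (Multiplicative.toAdd g).1.val * β ^ (Multiplicative.toAdd h).1.val *
          (γ ^ (Multiplicative.toAdd g).2.val * γ ^ (Multiplicative.toAdd h).2.val)
        = β ^ (Multiplicative.toAdd g).1.val *
            (β ^ (Multiplicative.toAdd h).1.val * γ ^ (Multiplicative.toAdd g).2.val) *
            γ ^ (Multiplicative.toAdd h).2.val := by group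
      _ = β ^ (Multiplicative.toAdd g).1.val *
            (γ ^ (Multiplicative.toAdd g).2.val * β ^ (Multiplicative.toAdd h).1.val) *
            γ ^ (Multiplicative.toAdd h).2.val := by rw [hcom.eq]
      _ = _ := by group

lemma kleinHom_apply (β γ : G) (hβ : β ^ 2 = 1) (hγ : γ ^ 2 = 1) (hc : Commute β γ)
    (g : Multiplicative (ZMod 2 × ZMod 2)) :
    kleinHom β γ hβ hγ hc g =
      β ^ ((Multiplicative.toAdd g).1.val) * γ ^ ((Multiplicative.toAdd g).2.val) := rfl

lemma kleinHom_injective (β γ : G) (hβ : β ^ 2 = 1) (hγ : γ ^ 2 = 1) (hc : Commute β γ)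
    (hβ1 : β ≠ 1) (hγ1 : γ ≠ 1) (hβγ : β * γ ≠ 1) :
    Function.Injective (kleinHom β γ hβ hγ hc) := by
  rw [injective_iff_map_eq_one]
  intro g hg
  rw [kleinHom_apply] at hg
  have hcases : ∀ c : ZMod 2, c = 0 ∨ c = 1 := by decide
  have key : (Multiplicative.toAdd g).1 = 0 → (Multiplicative.toAdd g).2 = 0 → g = 1 := by
    intro h1 h2
    have hta : Multiplicative.toAdd g = (0, 0) := Prod.ext h1 h2
    have hg0 : g = Multiplicative.ofAdd (0, 0) := by
      rw [← hta, ofAdd_toAdd]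
    rw [hg0, show ((0, 0) : ZMod 2 × ZMod 2) = 0 from rfl, ofAdd_zero]
  rcases hcases (Multiplicative.toAdd g).1 with h1 | h1 <;>
    rcases hcases (Multiplicative.toAdd g).2 with h2 | h2 <;>
    rw [h1, h2] at hg <;>
    simp only [show ((0:ZMod 2)).val = 0 from rfl, show ((1:ZMod 2)).val = 1 from rfl,
      pow_zero, pow_one, one_mul, mul_one] at hg
  · exact key h1 h2
  · exact absurd hg hγ1
  · exact absurd hg hβ1
  · exact absurd hg hβγ

lemma kleinHom_range (β γ : G) (hβ : β ^ 2 = 1) (hγ : γ ^ 2 = 1) (hc : Commute β γ) :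
    (kleinHom β γ hβ hγ hc).range = Subgroup.closure {β, γ} := by
  apply le_antisymm
  · rintro _ ⟨g, rfl⟩
    rw [kleinHom_apply]
    have hb : β ∈ Subgroup.closure ({β, γ} : Set G) :=
      Subgroup.subset_closure (Set.mem_insert _ _)
    have hg : γ ∈ Subgroup.closure ({β, γ} : Set G) :=
      Subgroup.subset_closure (Set.mem_insert_of_mem _ rfl)
    exact mul_mem (pow_mem hb _) (pow_mem hg _)
  · rw [Subgroup.closure_le]
    rintro x (rfl | rfl)
    · exact ⟨Multiplicative.ofAdd (1, 0), by
        simp [kleinHom_apply, show ((1:ZMod 2)).val = 1 from rfl,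
          show ((0:ZMod 2)).val = 0 from rfl]⟩
    · exact ⟨Multiplicative.ofAdd (0, 1), by
        simp [kleinHom_apply, show ((1:ZMod 2)).val = 1 from rfl,
          show ((0:ZMod 2)).val = 0 from rfl]⟩

lemma klein_iso (β γ : G) (hβ : β ^ 2 = 1) (hγ : γ ^ 2 = 1) (hc : Commute β γ)
    (hβ1 : β ≠ 1) (hγ1 : γ ≠ 1) (hβγ : β * γ ≠ 1) :
    Nonempty ((Subgroup.closure {β, γ} : Subgroup G) ≃* Multiplicative (ZMod 2 × ZMod 2)) := by
  have e1 := MonoidHom.ofInjective (kleinHom_injective β γ hβ hγ hc hβ1 hγ1 hβγ)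
  exact ⟨(MulEquiv.subgroupCongr (kleinHom_range β γ hβ hγ hc).symm).trans e1.symm⟩

end Klein

end KleinAux


namespace KleinAux

lemma comm_F1F2 : Function.Involutive.toPerm F1 F1_invol * Function.Involutive.toPerm F2 F2_invol
    = Function.Involutive.toPerm F2 F2_invol * Function.Involutive.toPerm F1 F1_invol := by
  apply Equiv.ext
  rintro ⟨p, hp⟩
  obtain ⟨w, x, y, z, u, v, h1, h2, e1, e2, hq, hl⟩ := hp
  have hpe : p = (Projectivization.mk ℝ ![w, x, y, z] h1, Projectivization.mk ℝ ![u, v] h2) :=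
    Prod.ext e1 e2
  subst hpe
  apply Subtype.ext
  show G1 (G2 _) = G2 (G1 _)
  rw [G2_mk h1 h2, G1_mk h1 h2, G1_mk, G2_mk]

lemma h4a : (![1, 0, 0, 0] : Fin 4 → ℝ) ≠ 0 := fun h => by simpa using congrFun h 0
lemma h2a : (![1, 0] : Fin 2 → ℝ) ≠ 0 := fun h => by simpa using congrFun h 0
lemma h4b : (![1, 1, 0, 1] : Fin 4 → ℝ) ≠ 0 := fun h => by simpa using congrFun h 0
lemma h2b : (![1, 1] : Fin 2 → ℝ) ≠ 0 := fun h => by simpa using congrFun h 0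

lemma hP0mem : (Projectivization.mk ℝ ![1, 0, 0, 0] h4a,
    Projectivization.mk ℝ ![1, 0] h2a) ∈ Z2Real :=
  ⟨1, 0, 0, 0, 1, 0, h4a, h2a, rfl, rfl, by norm_num, by norm_num⟩

lemma hP1mem : (Projectivization.mk ℝ ![1, 1, 0, 1] h4b,
    Projectivization.mk ℝ ![1, 1] h2b) ∈ Z2Real :=
  ⟨1, 1, 0, 1, 1, 1, h4b, h2b, rfl, rfl, by norm_num, by norm_num⟩

lemma ne1 : Function.Involutive.toPerm F1 F1_invol ≠ 1 := by
  intro heq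
  have h5 : (Function.Involutive.toPerm F1 F1_invol ⟨_, hP0mem⟩).val = _ := G1_mk h4a h2a
  rw [heq] at h5
  have h6 := congrArg Prod.fst h5
  simp only [Equiv.Perm.one_apply] at h6
  rw [Projectivization.mk_eq_mk_iff'] at h6
  obtain ⟨a, ha⟩ := h6
  simpa using congrFun ha 0

lemma ne2 : Function.Involutive.toPerm F2 F2_invol ≠ 1 := by
  intro heq
  have h5 : (Function.Involutive.toPerm F2 F2_invol ⟨_, hP1mem⟩).val = _ := G2_mk h4b h2b
  rw [heq] at h5
  have h6 := congrArg Prod.fst h5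
  simp only [Equiv.Perm.one_apply] at h6
  rw [Projectivization.mk_eq_mk_iff'] at h6
  obtain ⟨a, ha⟩ := h6
  have e0 := congrFun ha 0
  have e1 := congrFun ha 1
  simp at e0 e1
  rw [e0] at e1
  norm_num at e1

lemma ne3 : Function.Involutive.toPerm F1 F1_invol * Function.Involutive.toPerm F2 F2_invol ≠ 1 := by
  intro heq
  have h5 : ((Function.Involutive.toPerm F1 F1_invol * Function.Involutive.toPerm F2 F2_invol)
      ⟨_, hP0mem⟩).val = G1 (G2 (Projectivization.mk ℝ ![1, 0, 0, 0] h4a,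
        Projectivization.mk ℝ ![1, 0] h2a)) := rfl
  rw [heq, G2_mk h4a h2a, G1_mk] at h5
  have h6 := congrArg Prod.fst h5
  simp only [Equiv.Perm.one_apply] at h6
  rw [Projectivization.mk_eq_mk_iff'] at h6
  obtain ⟨a, ha⟩ := h6
  simpa using congrFun ha 0

lemma sq1 : Function.Involutive.toPerm F1 F1_invol ^ 2 = 1 := by
  rw [sq]; exact Equiv.ext fun p => F1_invol p

lemma sq2 : Function.Involutive.toPerm F2 F2_invol ^ 2 = 1 := by
  rw [sq]; exact Equiv.ext fun p => F2_invol p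

end KleinAux

open KleinAux in
/-- The maps `α₁([w:x:y:z],[u:v]) = ([z:−x:y:w],[v:u])` and
`α₂([w:x:y:z],[u:v]) = ([w:−x:y:z],[u:v])` are well-defined bijections of `Z₂(ℝ)` satisfying
`α₁² = α₂² = (α₁α₂)² = id`, all three of `α₁, α₂, α₁α₂` being nontrivial, and hence they
generate a subgroup of the symmetric group of `Z₂(ℝ)` isomorphic to the Klein four-group. -/
theorem stmt_3 :
    ∃ α₁ α₂ : Equiv.Perm Z2Real,
      (∀ (w x y z u v : ℝ) (h1 : (![w, x, y, z] : Fin 4 → ℝ) ≠ 0)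
          (h2 : (![u, v] : Fin 2 → ℝ) ≠ 0)
          (h1' : (![z, -x, y, w] : Fin 4 → ℝ) ≠ 0)
          (h2' : (![v, u] : Fin 2 → ℝ) ≠ 0)
          (hmem : (Projectivization.mk ℝ ![w, x, y, z] h1,
              Projectivization.mk ℝ ![u, v] h2) ∈ Z2Real),
        (α₁ ⟨_, hmem⟩).val =
          (Projectivization.mk ℝ ![z, -x, y, w] h1',
            Projectivization.mk ℝ ![v, u] h2')) ∧
      (∀ (w x y z u v : ℝ) (h1 : (![w, x, y, z] : Fin 4 → ℝ) ≠ 0)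
          (h2 : (![u, v] : Fin 2 → ℝ) ≠ 0)
          (h1' : (![w, -x, y, z] : Fin 4 → ℝ) ≠ 0)
          (hmem : (Projectivization.mk ℝ ![w, x, y, z] h1,
              Projectivization.mk ℝ ![u, v] h2) ∈ Z2Real),
        (α₂ ⟨_, hmem⟩).val =
          (Projectivization.mk ℝ ![w, -x, y, z] h1',
            Projectivization.mk ℝ ![u, v] h2)) ∧
      α₁ ^ 2 = 1 ∧ α₂ ^ 2 = 1 ∧ (α₁ * α₂) ^ 2 = 1 ∧
      α₁ ≠ 1 ∧ α₂ ≠ 1 ∧ α₁ * α₂ ≠ 1 ∧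
      Nonempty ((Subgroup.closure {α₁, α₂} : Subgroup (Equiv.Perm Z2Real)) ≃*
        Multiplicative (ZMod 2 × ZMod 2)) := by
  have hcomm : Commute (Function.Involutive.toPerm F1 F1_invol)
      (Function.Involutive.toPerm F2 F2_invol) := comm_F1F2
  refine ⟨F1_invol.toPerm, F2_invol.toPerm, ?_, ?_, sq1, sq2, ?_, ne1, ne2, ne3,
    klein_iso _ _ sq1 sq2 hcomm ne1 ne2 ne3⟩
  · intro w x y z u v h1 h2 h1' h2' hmem
    exact G1_mk h1 h2
  · intro w x y z u v h1 h2 h1' hmem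
    exact G2_mk h1 h2
  · rw [hcomm.mul_pow, sq1, sq2, one_mul]
end

section
/- Let W = {([x₀:x₁:x₂],[y₀:y₁:y₂]) ∈ ℙ²(ℝ)×ℙ²(ℝ) : x₀y₀ = x₁y₁ = x₂y₂}. The maps α₁(x,y) = ([y₂:y₀:y₁],[x₂:x₀:x₁]) and α₂(x,y) = ([x₁:x₀:x₂],[y₁:y₀:y₂]) are well-defined bijections of W; α₁ has order exactly 6, α₂ has order exactly 2, (α₁α₂)² = id, and the subgroup of the symmetric group of W generated by α₁ and α₂ is isomorphic to the dihedral group D₆ of order 12. -/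
/-- The real del Pezzo surface of degree 6:
`W = {([x₀:x₁:x₂],[y₀:y₁:y₂]) ∈ ℙ² × ℙ² : x₀y₀ = x₁y₁ = x₂y₂}`. -/
def W6 : Set (Projectivization ℝ (Fin 3 → ℝ) × Projectivization ℝ (Fin 3 → ℝ)) :=
  {P | ∃ (x₀ x₁ x₂ y₀ y₁ y₂ : ℝ) (hx : (![x₀, x₁, x₂] : Fin 3 → ℝ) ≠ 0)
      (hy : (![y₀, y₁, y₂] : Fin 3 → ℝ) ≠ 0),
      P.1 = Projectivization.mk ℝ ![x₀, x₁, x₂] hx ∧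
      P.2 = Projectivization.mk ℝ ![y₀, y₁, y₂] hy ∧
      x₀ * y₀ = x₁ * y₁ ∧ x₁ * y₁ = x₂ * y₂}

namespace StmtFour

abbrev P2 := Projectivization ℝ (Fin 3 → ℝ)

theorem mk_congr {v w : Fin 3 → ℝ} (h : v = w) (hv : v ≠ 0) (hw : w ≠ 0) :
    Projectivization.mk ℝ v hv = Projectivization.mk ℝ w hw := by subst h; rfl

theorem vec_eq_zero_iff {a b c : ℝ} :
    (![a, b, c] : Fin 3 → ℝ) = 0 ↔ a = 0 ∧ b = 0 ∧ c = 0 := by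
  constructor
  · intro h; exact ⟨congrFun h 0, congrFun h 1, congrFun h 2⟩
  · rintro ⟨rfl, rfl, rfl⟩; funext i; fin_cases i <;> rfl

theorem rot_ne {a b c : ℝ} (h : (![a, b, c] : Fin 3 → ℝ) ≠ 0) :
    (![c, a, b] : Fin 3 → ℝ) ≠ 0 := by
  simp only [ne_eq, vec_eq_zero_iff] at h ⊢; tauto

theorem swap_ne {a b c : ℝ} (h : (![a, b, c] : Fin 3 → ℝ) ≠ 0) :
    (![b, a, c] : Fin 3 → ℝ) ≠ 0 := by
  simp only [ne_eq, vec_eq_zero_iff] at h ⊢; tauto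

def cyc3 : Fin 3 → Fin 3 := ![2, 0, 1]
def cyc3' : Fin 3 → Fin 3 := ![1, 2, 0]
def swp3 : Fin 3 → Fin 3 := ![1, 0, 2]

noncomputable def Mc : P2 → P2 :=
  Projectivization.map (LinearMap.funLeft ℝ ℝ cyc3)
    (LinearMap.funLeft_injective_of_surjective ℝ ℝ cyc3 (by decide))

noncomputable def Mc' : P2 → P2 :=
  Projectivization.map (LinearMap.funLeft ℝ ℝ cyc3')
    (LinearMap.funLeft_injective_of_surjective ℝ ℝ cyc3' (by decide))

noncomputable def Ms : P2 → P2 :=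
  Projectivization.map (LinearMap.funLeft ℝ ℝ swp3)
    (LinearMap.funLeft_injective_of_surjective ℝ ℝ swp3 (by decide))

@[simp] theorem Mc_mk3 {a b c : ℝ} (h : (![a, b, c] : Fin 3 → ℝ) ≠ 0) :
    Mc (Projectivization.mk ℝ ![a, b, c] h) = Projectivization.mk ℝ ![c, a, b] (rot_ne h) := by
  unfold Mc
  rw [Projectivization.map_mk]
  exact mk_congr (by funext i; fin_cases i <;> rfl) _ _

@[simp] theorem Ms_mk3 {a b c : ℝ} (h : (![a, b, c] : Fin 3 → ℝ) ≠ 0) :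
    Ms (Projectivization.mk ℝ ![a, b, c] h) = Projectivization.mk ℝ ![b, a, c] (swap_ne h) := by
  unfold Ms
  rw [Projectivization.map_mk]
  exact mk_congr (by funext i; fin_cases i <;> rfl) _ _

theorem Mc'_Mc (x : P2) : Mc' (Mc x) = x := by
  induction x using Projectivization.ind with
  | h v hv =>
    unfold Mc Mc'
    rw [Projectivization.map_mk, Projectivization.map_mk]
    exact mk_congr (by funext i; fin_cases i <;> rfl) _ _

theorem Mc_Mc' (x : P2) : Mc (Mc' x) = x := by
  induction x using Projectivization.ind with
  | h v hv =>
    unfold Mc Mc'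
    rw [Projectivization.map_mk, Projectivization.map_mk]
    exact mk_congr (by funext i; fin_cases i <;> rfl) _ _

theorem Ms_Ms (x : P2) : Ms (Ms x) = x := by
  induction x using Projectivization.ind with
  | h v hv =>
    unfold Ms
    rw [Projectivization.map_mk, Projectivization.map_mk]
    exact mk_congr (by funext i; fin_cases i <;> rfl) _ _

theorem Mc_Mc_Mc (x : P2) : Mc (Mc (Mc x)) = x := by
  induction x using Projectivization.ind with
  | h v hv =>
    unfold Mc
    rw [Projectivization.map_mk, Projectivization.map_mk, Projectivization.map_mk]
    exact mk_congr (by funext i; fin_cases i <;> rfl) _ _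

theorem McMsMcMs (x : P2) : Mc (Ms (Mc (Ms x))) = x := by
  induction x using Projectivization.ind with
  | h v hv =>
    unfold Mc Ms
    rw [Projectivization.map_mk, Projectivization.map_mk, Projectivization.map_mk,
      Projectivization.map_mk]
    exact mk_congr (by funext i; fin_cases i <;> rfl) _ _

/-- The ambient map of α₁. -/
noncomputable def E1 : (P2 × P2) ≃ (P2 × P2) where
  toFun p := (Mc p.2, Mc p.1)
  invFun p := (Mc' p.2, Mc' p.1)
  left_inv p := by simp [Mc'_Mc]
  right_inv p := by simp [Mc_Mc']

/-- The ambient map of α₂. -/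
noncomputable def E2 : (P2 × P2) ≃ (P2 × P2) where
  toFun p := (Ms p.1, Ms p.2)
  invFun p := (Ms p.1, Ms p.2)
  left_inv p := by simp [Ms_Ms]
  right_inv p := by simp [Ms_Ms]

theorem E1_mem {p : P2 × P2} (hp : p ∈ W6) : E1 p ∈ W6 := by
  obtain ⟨x0, x1, x2, y0, y1, y2, hx, hy, h1, h2, hp1, hp2⟩ := hp
  refine ⟨y2, y0, y1, x2, x0, x1, rot_ne hy, rot_ne hx, ?_, ?_, ?_, ?_⟩
  · show Mc p.2 = _
    rw [h2]; exact Mc_mk3 hy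
  · show Mc p.1 = _
    rw [h1]; exact Mc_mk3 hx
  · linear_combination - hp1 - hp2
  · linear_combination hp1

theorem E1symm_mem {p : P2 × P2} (hp : p ∈ W6) : E1.symm p ∈ W6 := by
  obtain ⟨x0, x1, x2, y0, y1, y2, hx, hy, h1, h2, hp1, hp2⟩ := hp
  have hy' : (![y1, y2, y0] : Fin 3 → ℝ) ≠ 0 := rot_ne (rot_ne hy)
  have hx' : (![x1, x2, x0] : Fin 3 → ℝ) ≠ 0 := rot_ne (rot_ne hx)
  refine ⟨y1, y2, y0, x1, x2, x0, hy', hx', ?_, ?_, ?_, ?_⟩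
  · show Mc' p.2 = _
    rw [h2]
    unfold Mc'
    rw [Projectivization.map_mk]
    exact mk_congr (by funext i; fin_cases i <;> rfl) _ _
  · show Mc' p.1 = _
    rw [h1]
    unfold Mc'
    rw [Projectivization.map_mk]
    exact mk_congr (by funext i; fin_cases i <;> rfl) _ _
  · linear_combination hp2
  · linear_combination - hp1 - hp2

theorem E2_mem {p : P2 × P2} (hp : p ∈ W6) : E2 p ∈ W6 := by
  obtain ⟨x0, x1, x2, y0, y1, y2, hx, hy, h1, h2, hp1, hp2⟩ := hp
  refine ⟨x1, x0, x2, y1, y0, y2, swap_ne hx, swap_ne hy, ?_, ?_, ?_, ?_⟩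
  · show Ms p.1 = _
    rw [h1]; exact Ms_mk3 hx
  · show Ms p.2 = _
    rw [h2]; exact Ms_mk3 hy
  · linear_combination - hp1
  · linear_combination hp1 + hp2

theorem E1_iff (p : P2 × P2) : p ∈ W6 ↔ E1 p ∈ W6 := by
  refine ⟨E1_mem, fun h => ?_⟩
  have := E1symm_mem h
  rwa [Equiv.symm_apply_apply] at this

theorem E2_iff (p : P2 × P2) : p ∈ W6 ↔ E2 p ∈ W6 := by
  refine ⟨E2_mem, fun h => ?_⟩
  have := E2_mem h
  have h2 : E2 (E2 p) = p := by
    show (Ms (Ms p.1), Ms (Ms p.2)) = p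
    simp [Ms_Ms]
  rwa [h2] at this

noncomputable def A1 : Equiv.Perm W6 := E1.subtypeEquiv E1_iff
noncomputable def A2 : Equiv.Perm W6 := E2.subtypeEquiv E2_iff

@[simp] theorem A1_val (z : W6) : (A1 z).val = (Mc z.val.2, Mc z.val.1) := rfl
@[simp] theorem A2_val (z : W6) : (A2 z).val = (Ms z.val.1, Ms z.val.2) := rfl

theorem mk_ne_mk {a b c d e f : ℝ} (h1 : (![a, b, c] : Fin 3 → ℝ) ≠ 0)
    (h2 : (![d, e, f] : Fin 3 → ℝ) ≠ 0)
    (H : ∀ t : ℝ, t * d = a → t * e = b → t * f = c → False) :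
    Projectivization.mk ℝ ![a, b, c] h1 ≠ Projectivization.mk ℝ ![d, e, f] h2 := by
  intro hmk
  rw [Projectivization.mk_eq_mk_iff'] at hmk
  obtain ⟨t, ht⟩ := hmk
  have e0 := congrFun ht 0
  have e1 := congrFun ht 1
  have e2 := congrFun ht 2
  simp only [Pi.smul_apply, smul_eq_mul, Matrix.cons_val_zero, Matrix.cons_val_one,
    Matrix.head_cons, Matrix.cons_val_two, Matrix.tail_cons] at e0 e1 e2
  exact H t e0 e1 e2

end StmtFour

section DihedralAux

private theorem pow_val_add_s2 {G : Type*} [Group G] {a : G} (ha : orderOf a = 6)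
    (i j : ZMod 6) : a ^ (i + j).val = a ^ i.val * a ^ j.val := by
  have h := pow_mod_orderOf a (i.val + j.val)
  rw [ha] at h
  rw [ZMod.val_add, h, pow_add]

private theorem pow_val_sub {G : Type*} [Group G] {a : G} (ha : orderOf a = 6)
    (i j : ZMod 6) : a ^ (i - j).val = a ^ i.val * (a ^ j.val)⁻¹ := by
  have h' : i - j + j = i := by ring
  have h2 := pow_val_add_s2 ha (i - j) j
  rw [h'] at h2
  rw [h2, mul_inv_cancel_right]

private theorem pow_inv_comm' {G : Type*} [Group G] (a : G) (m n : ℕ) :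
    (a ^ m)⁻¹ * a ^ n = a ^ n * (a ^ m)⁻¹ :=
  ((Commute.pow_pow_self a n m).inv_right).eq.symm

private theorem dihedral6_aux {G : Type*} [Group G] {a b : G}
    (ha : orderOf a = 6) (hb2 : b ^ 2 = 1) (hrel : (a * b) ^ 2 = 1)
    (hnot : ∀ m : ℕ, m < 6 → b * a ^ m ≠ 1) :
    Nonempty ((Subgroup.closure {a, b} : Subgroup G) ≃* DihedralGroup 6) := by
  have hbb : b * b = 1 := by rw [← sq]; exact hb2
  have hbinv : b⁻¹ = b := inv_eq_of_mul_eq_one_right hbb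
  have hconj : b * a * b⁻¹ = a⁻¹ := by
    rw [hbinv]
    have h4 : a * (b * a * b) = 1 := by
      have h := hrel
      rw [sq] at h
      calc a * (b * a * b) = a * b * (a * b) := by group
        _ = 1 := h
    exact (inv_eq_iff_mul_eq_one.mpr h4).symm
  have hconjpow : ∀ m : ℕ, b * a ^ m * b = (a ^ m)⁻¹ := by
    intro m
    have h5 := conj_pow (i := m) (a := b) (b := a)
    rw [hconj] at h5
    calc b * a ^ m * b = b * a ^ m * b⁻¹ := by rw [hbinv]
      _ = a⁻¹ ^ m := h5.symm
      _ = (a ^ m)⁻¹ := inv_pow a m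
  have hcomm : ∀ m : ℕ, a ^ m * b = b * (a ^ m)⁻¹ := by
    intro m
    calc a ^ m * b = b * (b * a ^ m * b) := by
          rw [← mul_assoc, ← mul_assoc, hbb, one_mul]
      _ = b * (a ^ m)⁻¹ := by rw [hconjpow]
  classical
  let f : DihedralGroup 6 → G := fun g =>
    match g with
    | DihedralGroup.r i => a ^ i.val
    | DihedralGroup.sr i => b * a ^ i.val
  have hf : ∀ g₁ g₂, f (g₁ * g₂) = f g₁ * f g₂ := by
    rintro (i | i) (j | j)
    · show a ^ (i + j).val = a ^ i.val * a ^ j.val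
      exact pow_val_add_s2 ha i j
    · show b * a ^ (j - i).val = a ^ i.val * (b * a ^ j.val)
      symm
      calc a ^ i.val * (b * a ^ j.val) = a ^ i.val * b * a ^ j.val := (mul_assoc _ _ _).symm
        _ = b * (a ^ i.val)⁻¹ * a ^ j.val := by rw [hcomm]
        _ = b * ((a ^ i.val)⁻¹ * a ^ j.val) := mul_assoc _ _ _
        _ = b * (a ^ j.val * (a ^ i.val)⁻¹) := by rw [pow_inv_comm']
        _ = b * a ^ (j - i).val := by rw [← pow_val_sub ha]
    · show b * a ^ (i + j).val = b * a ^ i.val * a ^ j.val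
      rw [pow_val_add_s2 ha, mul_assoc]
    · show a ^ (j - i).val = b * a ^ i.val * (b * a ^ j.val)
      symm
      calc b * a ^ i.val * (b * a ^ j.val) = b * (a ^ i.val * b) * a ^ j.val := by group
        _ = b * (b * (a ^ i.val)⁻¹) * a ^ j.val := by rw [hcomm]
        _ = b * b * ((a ^ i.val)⁻¹ * a ^ j.val) := by group
        _ = (a ^ i.val)⁻¹ * a ^ j.val := by rw [hbb, one_mul]
        _ = a ^ j.val * (a ^ i.val)⁻¹ := pow_inv_comm' a _ _
        _ = a ^ (j - i).val := (pow_val_sub ha j i).symm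
  let φ : DihedralGroup 6 →* G := MonoidHom.mk' f hf
  have hinj : Function.Injective φ := by
    refine (injective_iff_map_eq_one φ).mpr ?_
    rintro (i | i) h
    · have h' : a ^ i.val = 1 := h
      have hd : orderOf a ∣ i.val := orderOf_dvd_of_pow_eq_one h'
      rw [ha] at hd
      have hv : i.val = 0 := Nat.eq_zero_of_dvd_of_lt hd (ZMod.val_lt i)
      have hi : i = 0 := by rwa [← ZMod.val_eq_zero]
      rw [hi, ← DihedralGroup.one_def]
    · exact absurd h (hnot i.val (ZMod.val_lt i))
  have hr1 : φ (DihedralGroup.r 1) = a := by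
    show a ^ (1 : ZMod 6).val = a
    have hv1 : (1 : ZMod 6).val = 1 := rfl
    rw [hv1, pow_one]
  have hr2 : φ (DihedralGroup.sr 0) = b := by
    show b * a ^ (0 : ZMod 6).val = b
    simp [ZMod.val_zero]
  have hrange : φ.range = Subgroup.closure {a, b} := by
    apply le_antisymm
    · rintro x ⟨g, rfl⟩
      have hac : a ∈ Subgroup.closure {a, b} :=
        Subgroup.subset_closure (Set.mem_insert _ _)
      have hbc : b ∈ Subgroup.closure {a, b} :=
        Subgroup.subset_closure (Set.mem_insert_of_mem _ rfl)
      cases g with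
      | r i => exact pow_mem hac _
      | sr i => exact mul_mem hbc (pow_mem hac _)
    · rw [Subgroup.closure_le]
      rintro x hx
      simp only [Set.mem_insert_iff, Set.mem_singleton_iff] at hx
      rcases hx with rfl | rfl
      · exact ⟨DihedralGroup.r 1, hr1⟩
      · exact ⟨DihedralGroup.sr 0, hr2⟩
  exact ⟨(MulEquiv.subgroupCongr hrange.symm).trans (MonoidHom.ofInjective hinj).symm⟩

end DihedralAux

namespace StmtFour

theorem hq1 : (![1, 2, 3] : Fin 3 → ℝ) ≠ 0 := by
  simp [vec_eq_zero_iff]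

theorem hq2 : (![6, 3, 2] : Fin 3 → ℝ) ≠ 0 := by
  simp [vec_eq_zero_iff]

noncomputable def Q : W6 :=
  ⟨(Projectivization.mk ℝ ![1, 2, 3] hq1, Projectivization.mk ℝ ![6, 3, 2] hq2),
    1, 2, 3, 6, 3, 2, hq1, hq2, rfl, rfl, by norm_num, by norm_num⟩

@[simp] theorem Q_val :
    Q.val = (Projectivization.mk ℝ ![1, 2, 3] hq1, Projectivization.mk ℝ ![6, 3, 2] hq2) := rfl

theorem A1_pow6 : A1 ^ 6 = 1 := by
  apply Equiv.ext
  rintro ⟨⟨x, y⟩, hz⟩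
  apply Subtype.ext
  simp [pow_succ, Equiv.Perm.mul_apply, A1_val, Mc_Mc_Mc]

theorem A2_sq : A2 ^ 2 = 1 := by
  apply Equiv.ext
  rintro ⟨⟨x, y⟩, hz⟩
  apply Subtype.ext
  simp [pow_succ, Equiv.Perm.mul_apply, A2_val, Ms_Ms]

theorem A1A2_sq : (A1 * A2) ^ 2 = 1 := by
  apply Equiv.ext
  rintro ⟨⟨x, y⟩, hz⟩
  apply Subtype.ext
  simp [pow_succ, Equiv.Perm.mul_apply, A1_val, A2_val, McMsMcMs]

theorem A1_sq_ne : A1 ^ 2 ≠ 1 := by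
  intro h
  have hQ : (A1 ^ 2) Q = Q := by rw [h]; rfl
  have h1 := congrArg (fun z : ↥W6 => z.val.1) hQ
  simp only [pow_succ, pow_zero, one_mul, Equiv.Perm.mul_apply, A1_val, Q_val,
    Mc_mk3, Ms_mk3, Prod.fst, Prod.snd] at h1
  exact mk_ne_mk _ _ (fun t e1 e2 e3 => by linarith) h1

theorem A1_cube_ne : A1 ^ 3 ≠ 1 := by
  intro h
  have hQ : (A1 ^ 3) Q = Q := by rw [h]; rfl
  have h1 := congrArg (fun z : ↥W6 => z.val.1) hQ
  simp only [pow_succ, pow_zero, one_mul, Equiv.Perm.mul_apply, A1_val, Q_val,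
    Mc_mk3, Ms_mk3, Prod.fst, Prod.snd] at h1
  exact mk_ne_mk _ _ (fun t e1 e2 e3 => by linarith) h1

theorem A2_A1_pow_ne : ∀ m : ℕ, m < 6 → A2 * A1 ^ m ≠ 1 := by
  intro m hm h
  have hQ : (A2 * A1 ^ m) Q = Q := by rw [h]; rfl
  have h1 := congrArg (fun z : ↥W6 => z.val.1) hQ
  interval_cases m <;>
    simp only [pow_succ, pow_zero, one_mul, Equiv.Perm.mul_apply, Equiv.Perm.one_apply,
      A1_val, A2_val, Q_val, Mc_mk3, Ms_mk3, Prod.fst, Prod.snd] at h1 <;>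
    exact mk_ne_mk _ _ (fun t e1 e2 e3 => by linarith) h1

theorem A1_order : orderOf A1 = 6 := by
  refine orderOf_eq_of_pow_and_pow_div_prime (by norm_num) A1_pow6 ?_
  intro p hp hdvd
  have hb1 := hp.two_le
  have hb2 : p ≤ 6 := Nat.le_of_dvd (by norm_num) hdvd
  interval_cases p
  · exact A1_cube_ne
  · exact A1_sq_ne
  · exact absurd hdvd (by norm_num)
  · exact absurd hdvd (by norm_num)
  · exact absurd hp (by norm_num)

theorem A2_ne_one : A2 ≠ 1 := by
  have := A2_A1_pow_ne 0 (by norm_num)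
  simpa using this

theorem A2_order : orderOf A2 = 2 := orderOf_eq_prime A2_sq A2_ne_one

end StmtFour

open StmtFour in
/-- The maps `α₁(x,y) = ([y₂:y₀:y₁],[x₂:x₀:x₁])` and `α₂(x,y) = ([x₁:x₀:x₂],[y₁:y₀:y₂])`
are well-defined bijections of `W`; `α₁` has order exactly `6`, `α₂` has order exactly `2`,
`(α₁α₂)² = id`, and the subgroup of the symmetric group of `W` generated by `α₁` and `α₂`
is isomorphic to the dihedral group `D₆` of order `12`. -/
theorem stmt_4 :
    ∃ α₁ α₂ : Equiv.Perm W6,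
      (∀ (x₀ x₁ x₂ y₀ y₁ y₂ : ℝ) (hx : (![x₀, x₁, x₂] : Fin 3 → ℝ) ≠ 0)
          (hy : (![y₀, y₁, y₂] : Fin 3 → ℝ) ≠ 0)
          (hy' : (![y₂, y₀, y₁] : Fin 3 → ℝ) ≠ 0)
          (hx' : (![x₂, x₀, x₁] : Fin 3 → ℝ) ≠ 0)
          (hmem : (Projectivization.mk ℝ ![x₀, x₁, x₂] hx,
              Projectivization.mk ℝ ![y₀, y₁, y₂] hy) ∈ W6),
        (α₁ ⟨_, hmem⟩).val =
          (Projectivization.mk ℝ ![y₂, y₀, y₁] hy',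
            Projectivization.mk ℝ ![x₂, x₀, x₁] hx')) ∧
      (∀ (x₀ x₁ x₂ y₀ y₁ y₂ : ℝ) (hx : (![x₀, x₁, x₂] : Fin 3 → ℝ) ≠ 0)
          (hy : (![y₀, y₁, y₂] : Fin 3 → ℝ) ≠ 0)
          (hx' : (![x₁, x₀, x₂] : Fin 3 → ℝ) ≠ 0)
          (hy' : (![y₁, y₀, y₂] : Fin 3 → ℝ) ≠ 0)
          (hmem : (Projectivization.mk ℝ ![x₀, x₁, x₂] hx,
              Projectivization.mk ℝ ![y₀, y₁, y₂] hy) ∈ W6),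
        (α₂ ⟨_, hmem⟩).val =
          (Projectivization.mk ℝ ![x₁, x₀, x₂] hx',
            Projectivization.mk ℝ ![y₁, y₀, y₂] hy')) ∧
      orderOf α₁ = 6 ∧ orderOf α₂ = 2 ∧ (α₁ * α₂) ^ 2 = 1 ∧
      Nonempty ((Subgroup.closure {α₁, α₂} : Subgroup (Equiv.Perm W6)) ≃*
        DihedralGroup 6) := by
  refine ⟨A1, A2, ?_, ?_, A1_order, A2_order, A1A2_sq, ?_⟩
  · intro x₀ x₁ x₂ y₀ y₁ y₂ hx hy hy' hx' hmem
    show (Mc (Projectivization.mk ℝ ![y₀, y₁, y₂] hy),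
        Mc (Projectivization.mk ℝ ![x₀, x₁, x₂] hx)) = _
    exact Prod.ext (Mc_mk3 hy) (Mc_mk3 hx)
  · intro x₀ x₁ x₂ y₀ y₁ y₂ hx hy hx' hy' hmem
    show (Ms (Projectivization.mk ℝ ![x₀, x₁, x₂] hx),
        Ms (Projectivization.mk ℝ ![y₀, y₁, y₂] hy)) = _
    exact Prod.ext (Ms_mk3 hx) (Ms_mk3 hy)
  · exact dihedral6_aux A1_order A2_sq A1A2_sq A2_A1_pow_ne
end

section
/- Let U = {([x₀:x₁:x₂],[y₀:y₁:y₂]) ∈ ℙ²(ℝ)×ℙ²(ℝ) : x₀y₀ = x₁y₂ + x₂y₁ and x₁y₁ = x₂y₂}. The maps α₁(x,y) = (y,x) and α₂(x,y) = ([x₀:x₂:x₁],[y₀:y₂:y₁]) are well-defined bijections of U satisfying α₁² = α₂² = (α₁α₂)² = id, with α₁, α₂ and α₁α₂ all different from the identity; consequently they generate a subgroup of the symmetric group of U isomorphic to the Klein four-group ℤ/2ℤ × ℤ/2ℤ. -/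
/-- The real del Pezzo surface of degree 6 obtained by blowing up two real points of the
sphere: `U = {([x₀:x₁:x₂],[y₀:y₁:y₂]) ∈ ℙ² × ℙ² : x₀y₀ = x₁y₂ + x₂y₁, x₁y₁ = x₂y₂}`. -/
def U6 : Set (Projectivization ℝ (Fin 3 → ℝ) × Projectivization ℝ (Fin 3 → ℝ)) :=
  {P | ∃ (x₀ x₁ x₂ y₀ y₁ y₂ : ℝ) (hx : (![x₀, x₁, x₂] : Fin 3 → ℝ) ≠ 0)
      (hy : (![y₀, y₁, y₂] : Fin 3 → ℝ) ≠ 0),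
      P.1 = Projectivization.mk ℝ ![x₀, x₁, x₂] hx ∧
      P.2 = Projectivization.mk ℝ ![y₀, y₁, y₂] hy ∧
      x₀ * y₀ = x₁ * y₂ + x₂ * y₁ ∧ x₁ * y₁ = x₂ * y₂}

private noncomputable def ee : (Fin 3 → ℝ) →ₗ[ℝ] (Fin 3 → ℝ) := LinearMap.funLeft ℝ ℝ (Equiv.swap 1 2)

private lemma ee_apply (a b c : ℝ) : ee ![a, b, c] = ![a, c, b] := by
  funext i
  fin_cases i <;> simp [ee, LinearMap.funLeft_apply, Equiv.swap_apply_def]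

private lemma ee_ee (v : Fin 3 → ℝ) : ee (ee v) = v := by
  funext i
  simp [ee, LinearMap.funLeft_apply, Equiv.swap_apply_self]

private lemma ee_inj : Function.Injective ee := Function.LeftInverse.injective ee_ee

private lemma ee_ne {v : Fin 3 → ℝ} (hv : v ≠ 0) : ee v ≠ 0 := fun h => hv (by
  have := ee_ee v; rw [h] at this; simpa using this.symm)

private noncomputable def mp : Projectivization ℝ (Fin 3 → ℝ) → Projectivization ℝ (Fin 3 → ℝ) :=
  Projectivization.map ee ee_inj

private lemma mp_mk (v : Fin 3 → ℝ) (hv : v ≠ 0) :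
    mp (Projectivization.mk ℝ v hv) = Projectivization.mk ℝ (ee v) (ee_ne hv) := by
  simp [mp, Projectivization.map_mk]

private lemma mp_mp (p : Projectivization ℝ (Fin 3 → ℝ)) : mp (mp p) = p := by
  induction p using Projectivization.ind with
  | h v hv => rw [mp_mk, mp_mk]; simp [ee_ee]

private lemma mem_swap {P : Projectivization ℝ (Fin 3 → ℝ) × Projectivization ℝ (Fin 3 → ℝ)}
    (h : P ∈ U6) : (P.2, P.1) ∈ U6 := by
  obtain ⟨x₀, x₁, x₂, y₀, y₁, y₂, hx, hy, h1, h2, h3, h4⟩ := h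
  exact ⟨y₀, y₁, y₂, x₀, x₁, x₂, hy, hx, h2, h1, by linarith, by linarith⟩

private lemma mk_congr {v w : Fin 3 → ℝ} (h : v = w) (hv : v ≠ 0) (hw : w ≠ 0) :
    Projectivization.mk ℝ v hv = Projectivization.mk ℝ w hw := by subst h; rfl

private lemma mem_mp {P : Projectivization ℝ (Fin 3 → ℝ) × Projectivization ℝ (Fin 3 → ℝ)}
    (h : P ∈ U6) : (mp P.1, mp P.2) ∈ U6 := by
  obtain ⟨x₀, x₁, x₂, y₀, y₁, y₂, hx, hy, h1, h2, h3, h4⟩ := h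
  refine ⟨x₀, x₂, x₁, y₀, y₂, y₁, ee_apply x₀ x₁ x₂ ▸ ee_ne hx, ee_apply y₀ y₁ y₂ ▸ ee_ne hy,
    ?_, ?_, by linarith, by linarith⟩
  · rw [h1, mp_mk]; exact mk_congr (ee_apply x₀ x₁ x₂) _ _
  · rw [h2, mp_mk]; exact mk_congr (ee_apply y₀ y₁ y₂) _ _

private noncomputable def a1 : Equiv.Perm U6 where
  toFun p := ⟨(p.1.2, p.1.1), mem_swap p.2⟩
  invFun p := ⟨(p.1.2, p.1.1), mem_swap p.2⟩
  left_inv p := Subtype.ext rfl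
  right_inv p := Subtype.ext rfl

private noncomputable def a2 : Equiv.Perm U6 where
  toFun p := ⟨(mp p.1.1, mp p.1.2), mem_mp p.2⟩
  invFun p := ⟨(mp p.1.1, mp p.1.2), mem_mp p.2⟩
  left_inv p := Subtype.ext (Prod.ext (mp_mp _) (mp_mp _))
  right_inv p := Subtype.ext (Prod.ext (mp_mp _) (mp_mp _))

private lemma pow_mod_two {G : Type*} [Group G] {g : G} (hg : g ^ 2 = 1) (m : ℕ) :
    g ^ m = g ^ (m % 2) := by
  conv_lhs => rw [← Nat.div_add_mod m 2]
  rw [pow_add, pow_mul, hg, one_pow, one_mul]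

private lemma pow_val_add_s4 {G : Type*} [Group G] {g : G} (hg : g ^ 2 = 1) (a b : ZMod 2) :
    g ^ (a + b).val = g ^ a.val * g ^ b.val := by
  rw [← pow_add, ZMod.val_add, ← pow_mod_two hg]

private lemma v111 : (![1, 1, 1] : Fin 3 → ℝ) ≠ 0 := fun h => by simpa using congrFun h 0
private lemma v211 : (![2, 1, 1] : Fin 3 → ℝ) ≠ 0 := fun h => by simpa using congrFun h 0
private lemma v120 : (![1, 2, 0] : Fin 3 → ℝ) ≠ 0 := fun h => by simpa using congrFun h 0
private lemma v201 : (![2, 0, 1] : Fin 3 → ℝ) ≠ 0 := fun h => by simpa using congrFun h 0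
private lemma v102 : (![1, 0, 2] : Fin 3 → ℝ) ≠ 0 := fun h => by simpa using congrFun h 0

private lemma memA : (Projectivization.mk ℝ ![1, 1, 1] v111, Projectivization.mk ℝ ![2, 1, 1] v211) ∈ U6 :=
  ⟨1, 1, 1, 2, 1, 1, v111, v211, rfl, rfl, by norm_num, by norm_num⟩

private lemma memB : (Projectivization.mk ℝ ![1, 2, 0] v120, Projectivization.mk ℝ ![2, 0, 1] v201) ∈ U6 :=
  ⟨1, 2, 0, 2, 0, 1, v120, v201, rfl, rfl, by norm_num, by norm_num⟩

private lemma ne_21_11 : Projectivization.mk ℝ ![2, 1, 1] v211 ≠ Projectivization.mk ℝ ![1, 1, 1] v111 := by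
  rw [Ne, Projectivization.mk_eq_mk_iff]
  rintro ⟨a, ha⟩
  have h0 := congrFun ha 0
  have h1 := congrFun ha 1
  simp [Units.smul_def] at h0 h1
  rw [h1] at h0
  norm_num at h0

private lemma ne_102_120 : Projectivization.mk ℝ ![1, 0, 2] v102 ≠ Projectivization.mk ℝ ![1, 2, 0] v120 := by
  rw [Ne, Projectivization.mk_eq_mk_iff]
  rintro ⟨a, ha⟩
  have h0 := congrFun ha 0
  have h1 := congrFun ha 1
  simp [Units.smul_def] at h0 h1

/-- The maps `α₁(x,y) = (y,x)` and `α₂(x,y) = ([x₀:x₂:x₁],[y₀:y₂:y₁])` are well-defined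
bijections of `U` satisfying `α₁² = α₂² = (α₁α₂)² = id`, with `α₁`, `α₂` and `α₁α₂` all
different from the identity; consequently they generate a subgroup of the symmetric group of
`U` isomorphic to the Klein four-group `ℤ/2ℤ × ℤ/2ℤ`. -/
theorem stmt_6 :
    ∃ α₁ α₂ : Equiv.Perm U6,
      (∀ (x₀ x₁ x₂ y₀ y₁ y₂ : ℝ) (hx : (![x₀, x₁, x₂] : Fin 3 → ℝ) ≠ 0)
          (hy : (![y₀, y₁, y₂] : Fin 3 → ℝ) ≠ 0)
          (hmem : (Projectivization.mk ℝ ![x₀, x₁, x₂] hx,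
              Projectivization.mk ℝ ![y₀, y₁, y₂] hy) ∈ U6),
        (α₁ ⟨_, hmem⟩).val =
          (Projectivization.mk ℝ ![y₀, y₁, y₂] hy,
            Projectivization.mk ℝ ![x₀, x₁, x₂] hx)) ∧
      (∀ (x₀ x₁ x₂ y₀ y₁ y₂ : ℝ) (hx : (![x₀, x₁, x₂] : Fin 3 → ℝ) ≠ 0)
          (hy : (![y₀, y₁, y₂] : Fin 3 → ℝ) ≠ 0)
          (hx' : (![x₀, x₂, x₁] : Fin 3 → ℝ) ≠ 0)
          (hy' : (![y₀, y₂, y₁] : Fin 3 → ℝ) ≠ 0)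
          (hmem : (Projectivization.mk ℝ ![x₀, x₁, x₂] hx,
              Projectivization.mk ℝ ![y₀, y₁, y₂] hy) ∈ U6),
        (α₂ ⟨_, hmem⟩).val =
          (Projectivization.mk ℝ ![x₀, x₂, x₁] hx',
            Projectivization.mk ℝ ![y₀, y₂, y₁] hy')) ∧
      α₁ ^ 2 = 1 ∧ α₂ ^ 2 = 1 ∧ (α₁ * α₂) ^ 2 = 1 ∧
      α₁ ≠ 1 ∧ α₂ ≠ 1 ∧ α₁ * α₂ ≠ 1 ∧
      Nonempty ((Subgroup.closure {α₁, α₂} : Subgroup (Equiv.Perm U6)) ≃*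
        Multiplicative (ZMod 2 × ZMod 2)) := by
  refine ⟨a1, a2, ?_, ?_, ?_, ?_, ?_, ?_, ?_, ?_, ?_⟩
  · intro x₀ x₁ x₂ y₀ y₁ y₂ hx hy hmem
    rfl
  · intro x₀ x₁ x₂ y₀ y₁ y₂ hx hy hx' hy' hmem
    show (mp _, mp _) = _
    rw [mp_mk, mp_mk]
    exact Prod.ext (mk_congr (ee_apply x₀ x₁ x₂) _ _) (mk_congr (ee_apply y₀ y₁ y₂) _ _)
  · exact Equiv.ext fun p => Subtype.ext rfl
  · exact Equiv.ext fun p => Subtype.ext (Prod.ext (mp_mp _) (mp_mp _))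
  · exact Equiv.ext fun p => Subtype.ext (Prod.ext (mp_mp _) (mp_mp _))
  · -- α₁ ≠ 1
    intro h
    have h2 : (a1 ⟨_, memA⟩).val = ((⟨_, memA⟩ : U6) : _) := by rw [h]; rfl
    exact ne_21_11 (congrArg Prod.fst h2)
  · -- α₂ ≠ 1
    intro h
    have h2 : (a2 ⟨_, memB⟩).val = ((⟨_, memB⟩ : U6) : _) := by rw [h]; rfl
    have key : mp (Projectivization.mk ℝ ![1, 2, 0] v120) = Projectivization.mk ℝ ![1, 0, 2] v102 := by
      rw [mp_mk]; exact mk_congr (ee_apply 1 2 0) _ _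
    have h3 : (a2 ⟨_, memB⟩).val.1 = Projectivization.mk ℝ ![1, 0, 2] v102 := key
    exact ne_102_120 (h3 ▸ congrArg Prod.fst h2)
  · -- α₁α₂ ≠ 1
    intro h
    have h2 : ((a1 * a2) ⟨_, memA⟩).val = ((⟨_, memA⟩ : U6) : _) := by rw [h]; rfl
    have key : mp (Projectivization.mk ℝ ![2, 1, 1] v211) = Projectivization.mk ℝ ![2, 1, 1] v211 := by
      rw [mp_mk]; exact mk_congr (ee_apply 2 1 1) _ _
    have h3 : ((a1 * a2) ⟨_, memA⟩).val.1 = Projectivization.mk ℝ ![2, 1, 1] v211 := key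
    exact ne_21_11 (h3 ▸ congrArg Prod.fst h2)
  · -- Klein four group
    have h1sq : a1 ^ 2 = 1 := Equiv.ext fun p => Subtype.ext rfl
    have h2sq : a2 ^ 2 = 1 := Equiv.ext fun p => Subtype.ext (Prod.ext (mp_mp _) (mp_mp _))
    have hc : Commute a1 a2 := Equiv.ext fun p => Subtype.ext rfl
    have hne1 : a1 ≠ 1 := fun h => ne_21_11 (congrArg Prod.fst
      (show (a1 ⟨_, memA⟩).val = ((⟨_, memA⟩ : U6) : _) by rw [h]; rfl))
    have hne2 : a2 ≠ 1 := by
      intro h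
      have h2 : (a2 ⟨_, memB⟩).val = ((⟨_, memB⟩ : U6) : _) := by rw [h]; rfl
      have key : mp (Projectivization.mk ℝ ![1, 2, 0] v120) = Projectivization.mk ℝ ![1, 0, 2] v102 := by
        rw [mp_mk]; exact mk_congr (ee_apply 1 2 0) _ _
      have h3 : (a2 ⟨_, memB⟩).val.1 = Projectivization.mk ℝ ![1, 0, 2] v102 := key
      exact ne_102_120 (h3 ▸ congrArg Prod.fst h2)
    have hne12 : a1 * a2 ≠ 1 := by
      intro h
      have h2 : ((a1 * a2) ⟨_, memA⟩).val = ((⟨_, memA⟩ : U6) : _) := by rw [h]; rfl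
      have key : mp (Projectivization.mk ℝ ![2, 1, 1] v211) = Projectivization.mk ℝ ![2, 1, 1] v211 := by
        rw [mp_mk]; exact mk_congr (ee_apply 2 1 1) _ _
      have h3 : ((a1 * a2) ⟨_, memA⟩).val.1 = Projectivization.mk ℝ ![2, 1, 1] v211 := key
      exact ne_21_11 (h3 ▸ congrArg Prod.fst h2)
    let φ : Multiplicative (ZMod 2 × ZMod 2) →* Equiv.Perm U6 :=
      { toFun := fun x => a1 ^ (x.toAdd.1).val * a2 ^ (x.toAdd.2).val
        map_one' := by simp
        map_mul' := by
          intro x y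
          show a1 ^ ((x.toAdd.1 + y.toAdd.1)).val * a2 ^ ((x.toAdd.2 + y.toAdd.2)).val = _
          rw [pow_val_add_s4 h1sq, pow_val_add_s4 h2sq]
          exact Commute.mul_mul_mul_comm (hc.pow_pow _ _) _ _ }
    have hval0 : (0 : ZMod 2).val = 0 := rfl
    have hval1 : (1 : ZMod 2).val = 1 := rfl
    have hφinj : Function.Injective φ := by
      rw [injective_iff_map_eq_one]
      intro x hx
      have hx' : a1 ^ (x.toAdd.1).val * a2 ^ (x.toAdd.2).val = 1 := hx
      have hz : ∀ c : ZMod 2, c = 0 ∨ c = 1 := by decide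
      have ha := hz x.toAdd.1
      have hb := hz x.toAdd.2
      have hxx : x.toAdd = (0, 0) := by
        rcases ha with ha | ha <;> rcases hb with hb | hb <;>
          rw [ha, hb] at hx' <;> simp only [hval0, hval1, pow_zero, pow_one, one_mul, mul_one] at hx'
        · exact Prod.ext ha hb
        · exact absurd hx' hne2
        · exact absurd hx' hne1
        · exact absurd hx' hne12
      exact hxx
    have hrange : φ.range = Subgroup.closure {a1, a2} := by
      apply le_antisymm
      · rintro g ⟨x, rfl⟩
        exact mul_mem (pow_mem (Subgroup.subset_closure (by simp)) _)
          (pow_mem (Subgroup.subset_closure (by simp)) _)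
      · rw [Subgroup.closure_le]
        intro g hg
        rcases hg with hg | hg
        · exact ⟨Multiplicative.ofAdd (1, 0), by
            show a1 ^ (1 : ZMod 2).val * a2 ^ (0 : ZMod 2).val = g
            rw [hval0, hval1, pow_one, pow_zero, mul_one, hg]⟩
        · exact ⟨Multiplicative.ofAdd (0, 1), by
            show a1 ^ (0 : ZMod 2).val * a2 ^ (1 : ZMod 2).val = g
            rw [hval0, hval1, pow_one, pow_zero, one_mul, hg]⟩
    exact ⟨(MulEquiv.subgroupCongr hrange.symm).trans (MonoidHom.ofInjective hφinj).symm⟩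
end

section
/- Let Z = {([x₀:x₁:x₂],[y₀:y₁:y₂]) ∈ ℙ²(ℂ)×ℙ²(ℂ) : x₀y₀ = x₁y₁ = x₂y₂}. For a nonzero complex number a, define β_a(x,y) = ([a·conj(a)·x₀ : x₁ : conj(a)·x₂], [y₀ : a·conj(a)·y₁ : a·y₂]). Then β_a is a well-defined bijection of Z, and β_a fixes every point of the curve s = {(x,y) ∈ Z : x₀ = x₁ = 0} if and only if a·conj(a) = 1, i.e. |a| = 1. -/
/-- The complex del Pezzo surface of degree 6:
`Z = {([x₀:x₁:x₂],[y₀:y₁:y₂]) ∈ ℙ²(ℂ) × ℙ²(ℂ) : x₀y₀ = x₁y₁ = x₂y₂}`. -/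
def Z6C : Set (Projectivization ℂ (Fin 3 → ℂ) × Projectivization ℂ (Fin 3 → ℂ)) :=
  {P | ∃ (x₀ x₁ x₂ y₀ y₁ y₂ : ℂ) (hx : (![x₀, x₁, x₂] : Fin 3 → ℂ) ≠ 0)
      (hy : (![y₀, y₁, y₂] : Fin 3 → ℂ) ≠ 0),
      P.1 = Projectivization.mk ℂ ![x₀, x₁, x₂] hx ∧
      P.2 = Projectivization.mk ℂ ![y₀, y₁, y₂] hy ∧
      x₀ * y₀ = x₁ * y₁ ∧ x₁ * y₁ = x₂ * y₂}

/-- The `(−1)`-section `s = {(x,y) ∈ Z : x₀ = x₁ = 0}`. -/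
def sSection : Set (Projectivization ℂ (Fin 3 → ℂ) × Projectivization ℂ (Fin 3 → ℂ)) :=
  {P | P ∈ Z6C ∧ ∃ (x₂ y₀ y₁ y₂ : ℂ) (hx : (![0, 0, x₂] : Fin 3 → ℂ) ≠ 0)
      (hy : (![y₀, y₁, y₂] : Fin 3 → ℂ) ≠ 0),
      P.1 = Projectivization.mk ℂ ![0, 0, x₂] hx ∧
      P.2 = Projectivization.mk ℂ ![y₀, y₁, y₂] hy}

namespace Stmt10Aux
open Projectivization

noncomputable section

/-- Diagonal linear map on `Fin 3 → ℂ`. -/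
def diagMap (d : Fin 3 → ℂ) : (Fin 3 → ℂ) →ₗ[ℂ] (Fin 3 → ℂ) where
  toFun v := fun i => d i * v i
  map_add' u v := by funext i; simp [mul_add]
  map_smul' c v := by funext i; simp [mul_comm, mul_left_comm]

lemma diagMap_inj (d : Fin 3 → ℂ) (hd : ∀ i, d i ≠ 0) :
    Function.Injective (diagMap d) := by
  intro u v h
  funext i
  have := congrFun h i
  simp only [diagMap, LinearMap.coe_mk, AddHom.coe_mk] at this
  exact mul_left_cancel₀ (hd i) this

def pmap (d : Fin 3 → ℂ) (hd : ∀ i, d i ≠ 0) :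
    Projectivization ℂ (Fin 3 → ℂ) → Projectivization ℂ (Fin 3 → ℂ) :=
  Projectivization.map (diagMap d) (diagMap_inj d hd)

lemma mk_congr {v w : Fin 3 → ℂ} (hv : v ≠ 0) (h : v = w) :
    mk ℂ v hv = mk ℂ w (h ▸ hv) := by subst h; rfl

lemma vec_ne_zero {x₀ x₁ x₂ : ℂ} (h : x₂ ≠ 0) : (![x₀, x₁, x₂] : Fin 3 → ℂ) ≠ 0 := by
  intro hc; exact h (congrFun hc 2)

lemma entry2_ne {x₂ : ℂ} (h : (![(0:ℂ), 0, x₂] : Fin 3 → ℂ) ≠ 0) : x₂ ≠ 0 := by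
  intro hc; apply h; subst hc; funext i; fin_cases i <;> rfl

lemma scale_ne (d : Fin 3 → ℂ) (hd : ∀ i, d i ≠ 0) {x₀ x₁ x₂ : ℂ}
    (hx : (![x₀, x₁, x₂] : Fin 3 → ℂ) ≠ 0) :
    (![d 0 * x₀, d 1 * x₁, d 2 * x₂] : Fin 3 → ℂ) ≠ 0 := by
  intro h
  apply hx
  funext i
  fin_cases i
  · have := congrFun h 0; simpa using mul_left_cancel₀ (hd 0) (by simpa using this.trans (mul_zero (d 0)).symm)
  · have := congrFun h 1; simpa using mul_left_cancel₀ (hd 1) (by simpa using this.trans (mul_zero (d 1)).symm)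
  · have := congrFun h 2; simpa using mul_left_cancel₀ (hd 2) (by simpa using this.trans (mul_zero (d 2)).symm)

lemma pmap_mk (d : Fin 3 → ℂ) (hd : ∀ i, d i ≠ 0) (x₀ x₁ x₂ : ℂ)
    (hx : (![x₀, x₁, x₂] : Fin 3 → ℂ) ≠ 0) :
    pmap d hd (mk ℂ ![x₀, x₁, x₂] hx) =
      mk ℂ ![d 0 * x₀, d 1 * x₁, d 2 * x₂] (scale_ne d hd hx) := by
  rw [pmap, Projectivization.map_mk]
  apply mk_congr
  funext i
  fin_cases i <;> simp [diagMap]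

lemma pmap_pmap (d : Fin 3 → ℂ) (hd : ∀ i, d i ≠ 0)
    (hd' : ∀ i, (d i)⁻¹ ≠ 0) (p : Projectivization ℂ (Fin 3 → ℂ)) :
    pmap (fun i => (d i)⁻¹) hd' (pmap d hd p) = p := by
  induction p using Projectivization.ind with
  | h v hv =>
    rw [pmap, pmap, Projectivization.map_mk, Projectivization.map_mk]
    apply (mk_eq_mk_iff' ℂ _ _ _ hv).2
    refine ⟨1, ?_⟩
    funext i
    simp [diagMap]
    exact (inv_mul_cancel_left₀ (hd i) _).symm

lemma pmap_pmap' (d : Fin 3 → ℂ) (hd : ∀ i, d i ≠ 0)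
    (hd' : ∀ i, (d i)⁻¹ ≠ 0) (p : Projectivization ℂ (Fin 3 → ℂ)) :
    pmap d hd (pmap (fun i => (d i)⁻¹) hd' p) = p := by
  induction p using Projectivization.ind with
  | h v hv =>
    rw [pmap, pmap, Projectivization.map_mk, Projectivization.map_mk]
    apply (mk_eq_mk_iff' ℂ _ _ _ hv).2
    refine ⟨1, ?_⟩
    funext i
    simp [diagMap]
    exact (mul_inv_cancel_left₀ (hd i) _).symm

lemma mem_Z6C_pmap (dx dy : Fin 3 → ℂ) (hdx : ∀ i, dx i ≠ 0) (hdy : ∀ i, dy i ≠ 0)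
    (h01 : dx 0 * dy 0 = dx 1 * dy 1) (h12 : dx 1 * dy 1 = dx 2 * dy 2)
    {P : Projectivization ℂ (Fin 3 → ℂ) × Projectivization ℂ (Fin 3 → ℂ)}
    (hP : P ∈ Z6C) : (pmap dx hdx P.1, pmap dy hdy P.2) ∈ Z6C := by
  obtain ⟨x₀, x₁, x₂, y₀, y₁, y₂, hx, hy, hP1, hP2, e1, e2⟩ := hP
  refine ⟨dx 0 * x₀, dx 1 * x₁, dx 2 * x₂, dy 0 * y₀, dy 1 * y₁, dy 2 * y₂,
    scale_ne dx hdx hx, scale_ne dy hdy hy, ?_, ?_, ?_, ?_⟩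
  · rw [hP1, pmap_mk]
  · rw [hP2, pmap_mk]
  · calc dx 0 * x₀ * (dy 0 * y₀) = dx 0 * dy 0 * (x₀ * y₀) := by ring
      _ = dx 1 * dy 1 * (x₁ * y₁) := by rw [h01, e1]
      _ = dx 1 * x₁ * (dy 1 * y₁) := by ring
  · calc dx 1 * x₁ * (dy 1 * y₁) = dx 1 * dy 1 * (x₁ * y₁) := by ring
      _ = dx 2 * dy 2 * (x₂ * y₂) := by rw [h12, e2]
      _ = dx 2 * x₂ * (dy 2 * y₂) := by ring

end
end Stmt10Aux

open Stmt10Aux Projectivization in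
/-- For a nonzero complex number `a`, the map
`β_a(x,y) = ([a·conj(a)·x₀ : x₁ : conj(a)·x₂], [y₀ : a·conj(a)·y₁ : a·y₂])` is a
well-defined bijection of `Z`, and `β_a` fixes every point of the curve `s` if and only if
`a·conj(a) = 1`. -/
theorem stmt_10 (a : ℂ) (ha : a ≠ 0) :
    ∃ β : Equiv.Perm Z6C,
      (∀ (x₀ x₁ x₂ y₀ y₁ y₂ : ℂ) (hx : (![x₀, x₁, x₂] : Fin 3 → ℂ) ≠ 0)
          (hy : (![y₀, y₁, y₂] : Fin 3 → ℂ) ≠ 0)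
          (hx' : (![a * starRingEnd ℂ a * x₀, x₁, starRingEnd ℂ a * x₂] : Fin 3 → ℂ) ≠ 0)
          (hy' : (![y₀, a * starRingEnd ℂ a * y₁, a * y₂] : Fin 3 → ℂ) ≠ 0)
          (hmem : (Projectivization.mk ℂ ![x₀, x₁, x₂] hx,
              Projectivization.mk ℂ ![y₀, y₁, y₂] hy) ∈ Z6C),
        (β ⟨_, hmem⟩).val =
          (Projectivization.mk ℂ ![a * starRingEnd ℂ a * x₀, x₁, starRingEnd ℂ a * x₂] hx',
            Projectivization.mk ℂ ![y₀, a * starRingEnd ℂ a * y₁, a * y₂] hy')) ∧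
      ((∀ p : Z6C, p.val ∈ sSection → β p = p) ↔ a * starRingEnd ℂ a = 1) := by
  have hca : starRingEnd ℂ a ≠ 0 := by simpa using ha
  have hdx : ∀ i, (![a * starRingEnd ℂ a, 1, starRingEnd ℂ a] : Fin 3 → ℂ) i ≠ 0 := by
    intro i; fin_cases i <;> simp [ha, hca]
  have hdy : ∀ i, (![1, a * starRingEnd ℂ a, a] : Fin 3 → ℂ) i ≠ 0 := by
    intro i; fin_cases i <;> simp [ha, hca]
  have hdxi : ∀ i, ((![a * starRingEnd ℂ a, 1, starRingEnd ℂ a] : Fin 3 → ℂ) i)⁻¹ ≠ 0 :=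
    fun i => inv_ne_zero (hdx i)
  have hdyi : ∀ i, ((![1, a * starRingEnd ℂ a, a] : Fin 3 → ℂ) i)⁻¹ ≠ 0 :=
    fun i => inv_ne_zero (hdy i)
  have hx01 : (![a * starRingEnd ℂ a, 1, starRingEnd ℂ a] : Fin 3 → ℂ) 0 *
      (![1, a * starRingEnd ℂ a, a] : Fin 3 → ℂ) 0 =
      (![a * starRingEnd ℂ a, 1, starRingEnd ℂ a] : Fin 3 → ℂ) 1 *
      (![1, a * starRingEnd ℂ a, a] : Fin 3 → ℂ) 1 := by simp
  have hx12 : (![a * starRingEnd ℂ a, 1, starRingEnd ℂ a] : Fin 3 → ℂ) 1 *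
      (![1, a * starRingEnd ℂ a, a] : Fin 3 → ℂ) 1 =
      (![a * starRingEnd ℂ a, 1, starRingEnd ℂ a] : Fin 3 → ℂ) 2 *
      (![1, a * starRingEnd ℂ a, a] : Fin 3 → ℂ) 2 := by simp [mul_comm]
  have hx01' : ((![a * starRingEnd ℂ a, 1, starRingEnd ℂ a] : Fin 3 → ℂ) 0)⁻¹ *
      ((![1, a * starRingEnd ℂ a, a] : Fin 3 → ℂ) 0)⁻¹ =
      ((![a * starRingEnd ℂ a, 1, starRingEnd ℂ a] : Fin 3 → ℂ) 1)⁻¹ *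
      ((![1, a * starRingEnd ℂ a, a] : Fin 3 → ℂ) 1)⁻¹ := by simp
  have hx12' : ((![a * starRingEnd ℂ a, 1, starRingEnd ℂ a] : Fin 3 → ℂ) 1)⁻¹ *
      ((![1, a * starRingEnd ℂ a, a] : Fin 3 → ℂ) 1)⁻¹ =
      ((![a * starRingEnd ℂ a, 1, starRingEnd ℂ a] : Fin 3 → ℂ) 2)⁻¹ *
      ((![1, a * starRingEnd ℂ a, a] : Fin 3 → ℂ) 2)⁻¹ := by
    simp [mul_inv, mul_comm]
  refine ⟨⟨fun p => ⟨(pmap _ hdx p.val.1, pmap _ hdy p.val.2),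
      mem_Z6C_pmap _ _ hdx hdy hx01 hx12 p.2⟩,
    fun p => ⟨(pmap _ hdxi p.val.1, pmap _ hdyi p.val.2),
      mem_Z6C_pmap _ _ hdxi hdyi hx01' hx12' p.2⟩,
    fun p => by apply Subtype.ext; dsimp; rw [pmap_pmap, pmap_pmap],
    fun p => by apply Subtype.ext; dsimp; rw [pmap_pmap', pmap_pmap']⟩, ?_, ?_⟩
  · intro x₀ x₁ x₂ y₀ y₁ y₂ hx hy hx' hy' hmem
    dsimp [Equiv.coe_fn_mk]
    rw [pmap_mk, pmap_mk, Prod.mk.injEq]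
    constructor
    · exact mk_congr _ (by funext i; fin_cases i <;> simp)
    · exact mk_congr _ (by funext i; fin_cases i <;> simp)
  · constructor
    · intro hfix
      have h0 : (![(0:ℂ), 0, 1] : Fin 3 → ℂ) ≠ 0 := vec_ne_zero one_ne_zero
      have h1 : (![(1:ℂ), 1, 0] : Fin 3 → ℂ) ≠ 0 := by
        intro h; exact one_ne_zero (congrFun h 0)
      have hmem0 : ((mk ℂ ![0, 0, 1] h0, mk ℂ ![1, 1, 0] h1) :
          Projectivization ℂ (Fin 3 → ℂ) × Projectivization ℂ (Fin 3 → ℂ)) ∈ Z6C :=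
        ⟨0, 0, 1, 1, 1, 0, h0, h1, rfl, rfl, by ring, by ring⟩
      have hs : ((mk ℂ ![0, 0, 1] h0, mk ℂ ![1, 1, 0] h1) :
          Projectivization ℂ (Fin 3 → ℂ) × Projectivization ℂ (Fin 3 → ℂ)) ∈ sSection :=
        ⟨hmem0, 1, 1, 1, 0, h0, h1, rfl, rfl⟩
      have hfx := congrArg (fun q : Z6C => q.val.2) (hfix ⟨_, hmem0⟩ hs)
      dsimp at hfx
      rw [pmap_mk, mk_eq_mk_iff'] at hfx
      obtain ⟨t, ht⟩ := hfx
      have e0 := congrFun ht 0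
      have e1 := congrFun ht 1
      simp at e0 e1
      rw [e0] at e1
      exact e1.symm
    · intro h1 p hp
      obtain ⟨hpZ, x₂, y₀, y₁, y₂, hx, hy, hP1, hP2⟩ := hp
      obtain ⟨x₀', x₁', x₂', y₀', y₁', y₂', hx', hy', hQ1, hQ2, e1, e2⟩ := p.2
      obtain ⟨t, ht⟩ := (mk_eq_mk_iff' ℂ _ _ hx' hx).1 (hQ1.symm.trans hP1)
      have hx0 : x₀' = 0 := by have := congrFun ht 0; simpa using this.symm
      have hx1 : x₁' = 0 := by have := congrFun ht 1; simpa using this.symm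
      have hx2' : x₂' ≠ 0 := by
        intro hc; apply hx'; funext i; fin_cases i <;> simp [hx0, hx1, hc]
      have hy2' : y₂' = 0 := by
        have h0 : x₂' * y₂' = 0 := by rw [← e2, hx1, zero_mul]
        exact (mul_eq_zero.1 h0).resolve_left hx2'
      apply Subtype.ext
      dsimp
      rw [Prod.mk.injEq]
      constructor
      · rw [hQ1, pmap_mk, mk_eq_mk_iff']
        refine ⟨starRingEnd ℂ a, ?_⟩
        funext i
        fin_cases i <;> simp [hx0, hx1, mul_comm]
      · rw [hQ2, pmap_mk]
        exact mk_congr _ (by funext i; fin_cases i <;> simp [hy2', h1])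
end

section
/- Let S = {[w:x:y:z] ∈ ℙ³(ℂ) : wz = x²+y²} and Z₂ = {([w:x:y:z],[u:v]) ∈ ℙ³(ℂ)×ℙ¹(ℂ) : wz = x²+y², uz = vw}, and let p: Z₂ → S be the projection onto the first factor. Then p is surjective; for every point q ∈ S other than the two points q₊ = [0:1:i:0] and q₋ = [0:1:−i:0], the fibre p⁻¹(q) consists of a single point (namely the one with [u:v] = [w:z]); and each of the two fibres p⁻¹(q₊) and p⁻¹(q₋) is in bijection with ℙ¹(ℂ). -/
/-- The complex quadric surface `S = {[w:x:y:z] ∈ ℙ³(ℂ) : wz = x² + y²}`. -/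
def Ssurf : Set (Projectivization ℂ (Fin 4 → ℂ)) :=
  {p | ∃ (w x y z : ℂ) (h : (![w, x, y, z] : Fin 4 → ℂ) ≠ 0),
      p = Projectivization.mk ℂ ![w, x, y, z] h ∧ w * z = x ^ 2 + y ^ 2}

/-- The surface `Z₂ = {([w:x:y:z],[u:v]) ∈ ℙ³(ℂ) × ℙ¹(ℂ) : wz = x² + y², uz = vw}`. -/
def Z2C : Set (Projectivization ℂ (Fin 4 → ℂ) × Projectivization ℂ (Fin 2 → ℂ)) :=
  {P | ∃ (w x y z u v : ℂ) (h1 : (![w, x, y, z] : Fin 4 → ℂ) ≠ 0)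
      (h2 : (![u, v] : Fin 2 → ℂ) ≠ 0),
      P = (Projectivization.mk ℂ ![w, x, y, z] h1, Projectivization.mk ℂ ![u, v] h2) ∧
      w * z = x ^ 2 + y ^ 2 ∧ u * z = v * w}

/-- The point `q₊ = [0:1:i:0]`. -/
noncomputable def qPlus : Projectivization ℂ (Fin 4 → ℂ) :=
  Projectivization.mk ℂ ![0, 1, Complex.I, 0]
    (by intro h; simpa using congrFun h 1)

/-- The point `q₋ = [0:1:−i:0]`. -/
noncomputable def qMinus : Projectivization ℂ (Fin 4 → ℂ) :=
  Projectivization.mk ℂ ![0, 1, -Complex.I, 0]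
    (by intro h; simpa using congrFun h 1)

open Projectivization

lemma vec2_ne_zero (a b : ℂ) : (![a,b] : Fin 2 → ℂ) ≠ 0 ↔ a ≠ 0 ∨ b ≠ 0 := by
  simp [funext_iff, Fin.forall_fin_two]; tauto

lemma vec2_eta (f : Fin 2 → ℂ) : (![f 0, f 1] : Fin 2 → ℂ) = f := by
  ext i; fin_cases i <;> rfl

lemma smul_vec2 (a w z u v : ℂ) (h1 : a*w = u) (h2 : a*z = v) :
    a • (![w,z] : Fin 2 → ℂ) = ![u,v] := by
  simp [funext_iff, Fin.forall_fin_two]; exact ⟨h1, h2⟩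

lemma smul_vec4 (a w x y z w' x' y' z' : ℂ) (h1 : a*w = w') (h2 : a*x = x')
    (h3 : a*y = y') (h4 : a*z = z') :
    a • (![w,x,y,z] : Fin 4 → ℂ) = ![w',x',y',z'] := by
  funext i; fin_cases i <;> simpa

lemma vec4_smul_eq {a w x y z w' x' y' z' : ℂ}
    (h : a • (![w,x,y,z] : Fin 4 → ℂ) = ![w',x',y',z']) :
    a*w = w' ∧ a*x = x' ∧ a*y = y' ∧ a*z = z' :=
  ⟨by simpa using congrFun h 0, by simpa using congrFun h 1,
   by simpa using congrFun h 2, by simpa using congrFun h 3⟩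

lemma collin (u v w z : ℂ) (h1 : (![u,v] : Fin 2 → ℂ) ≠ 0) (h2 : (![w,z] : Fin 2 → ℂ) ≠ 0)
    (h : u * z = v * w) :
    Projectivization.mk ℂ ![u,v] h1 = Projectivization.mk ℂ ![w,z] h2 := by
  rw [mk_eq_mk_iff']
  by_cases hw : w = 0
  · have hz : z ≠ 0 := ((vec2_ne_zero w z).1 h2).resolve_left (by simp [hw])
    have hu0 : u = 0 := by
      have h' : u * z = 0 := by rw [h, hw]; ring
      exact (mul_eq_zero.1 h').resolve_right hz
    exact ⟨v / z, smul_vec2 _ _ _ _ _ (by rw [hw, hu0]; ring) (by field_simp)⟩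
  · have hu : u ≠ 0 := by
      intro h0
      have hv : v = 0 := by
        have h' : v * w = 0 := by rw [← h, h0]; ring
        exact (mul_eq_zero.1 h').resolve_right hw
      rw [h0, hv] at h1
      exact h1 (by ext i; fin_cases i <;> rfl)
    refine ⟨u / w, smul_vec2 _ _ _ _ _ (by field_simp) ?_⟩
    field_simp
    linear_combination h

lemma zero_case (x y : ℂ) (h : (![(0:ℂ),x,y,0] : Fin 4 → ℂ) ≠ 0) (hxy : x^2 + y^2 = 0) :
    Projectivization.mk ℂ ![0,x,y,0] h = qPlus ∨
    Projectivization.mk ℂ ![0,x,y,0] h = qMinus := by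
  have hx : x ≠ 0 := by
    intro h0
    have hy : y = 0 := by
      have : y^2 = 0 := by rw [h0] at hxy; linear_combination hxy
      exact pow_eq_zero_iff (n := 2) (by norm_num) |>.1 this
    rw [h0, hy] at h
    exact h (by ext i; fin_cases i <;> rfl)
  have hfac : (y - Complex.I * x) * (y + Complex.I * x) = 0 := by
    linear_combination hxy - x^2 * Complex.I_sq
  rcases mul_eq_zero.1 hfac with h' | h'
  · left
    unfold qPlus
    rw [mk_eq_mk_iff']
    exact ⟨x, smul_vec4 _ _ _ _ _ _ _ _ _ (by ring) (by ring) (by linear_combination -h')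
      (by ring)⟩
  · right
    unfold qMinus
    rw [mk_eq_mk_iff']
    exact ⟨x, smul_vec4 _ _ _ _ _ _ _ _ _ (by ring) (by ring) (by linear_combination -h')
      (by ring)⟩

lemma fib_mem_qPlus (r : Projectivization ℂ (Fin 2 → ℂ)) : (qPlus, r) ∈ Z2C := by
  have h2 : (![r.rep 0, r.rep 1] : Fin 2 → ℂ) ≠ 0 := by
    rw [vec2_eta]; exact r.rep_nonzero
  refine ⟨0, 1, Complex.I, 0, r.rep 0, r.rep 1,
    (by intro h; simpa using congrFun h 1), h2, ?_, by
      rw [Complex.I_sq]; ring, by ring⟩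
  have hr : Projectivization.mk ℂ ![r.rep 0, r.rep 1] h2 = r := by
    rw [(mk_eq_mk_iff' ℂ _ _ h2 r.rep_nonzero).2 ⟨1, by rw [one_smul, vec2_eta]⟩]
    exact mk_rep r
  rw [hr]
  rfl

lemma fib_mem_qMinus (r : Projectivization ℂ (Fin 2 → ℂ)) : (qMinus, r) ∈ Z2C := by
  have h2 : (![r.rep 0, r.rep 1] : Fin 2 → ℂ) ≠ 0 := by
    rw [vec2_eta]; exact r.rep_nonzero
  refine ⟨0, 1, -Complex.I, 0, r.rep 0, r.rep 1,
    (by intro h; simpa using congrFun h 1), h2, ?_, by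
      rw [neg_pow, Complex.I_sq]; ring, by ring⟩
  have hr : Projectivization.mk ℂ ![r.rep 0, r.rep 1] h2 = r := by
    rw [(mk_eq_mk_iff' ℂ _ _ h2 r.rep_nonzero).2 ⟨1, by rw [one_smul, vec2_eta]⟩]
    exact mk_rep r
  rw [hr]
  rfl

/-- The projection `p : Z₂ → S` onto the first factor is surjective; over every point of `S`
other than `q₊` and `q₋` the fibre is a single point, namely the one with `[u:v] = [w:z]`;
and the fibres over `q₊` and `q₋` are each in bijection with `ℙ¹(ℂ)`. -/
theorem stmt_12 :
    (∀ P ∈ Z2C, P.1 ∈ Ssurf) ∧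
    (∀ q ∈ Ssurf, ∃ r, (q, r) ∈ Z2C) ∧
    (∀ q ∈ Ssurf, q ≠ qPlus → q ≠ qMinus →
      (∃! r : Projectivization ℂ (Fin 2 → ℂ), (q, r) ∈ Z2C) ∧
      ∀ (w x y z : ℂ) (h : (![w, x, y, z] : Fin 4 → ℂ) ≠ 0)
        (hwz : (![w, z] : Fin 2 → ℂ) ≠ 0),
        q = Projectivization.mk ℂ ![w, x, y, z] h →
        (q, Projectivization.mk ℂ ![w, z] hwz) ∈ Z2C) ∧
    Nonempty ({r : Projectivization ℂ (Fin 2 → ℂ) | (qPlus, r) ∈ Z2C} ≃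
      Projectivization ℂ (Fin 2 → ℂ)) ∧
    Nonempty ({r : Projectivization ℂ (Fin 2 → ℂ) | (qMinus, r) ∈ Z2C} ≃
      Projectivization ℂ (Fin 2 → ℂ)) := by
  refine ⟨?_, ?_, ?_, ?_, ?_⟩
  · -- projection lands in S
    rintro P ⟨w, x, y, z, u, v, h1, h2, hP, hrel, huv⟩
    exact ⟨w, x, y, z, h1, by rw [hP], hrel⟩
  · -- surjectivity
    rintro q ⟨w, x, y, z, h, hq, hrel⟩
    by_cases hwz : w = 0 ∧ z = 0
    · refine ⟨Projectivization.mk ℂ ![1, 0] (by intro h'; simpa using congrFun h' 0),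
        w, x, y, z, 1, 0, h, _, by rw [hq], hrel, by rw [hwz.1, hwz.2]; ring⟩
    · have h2 : (![w, z] : Fin 2 → ℂ) ≠ 0 := by
        rw [vec2_ne_zero]; tauto
      exact ⟨Projectivization.mk ℂ ![w, z] h2, w, x, y, z, w, z, h, h2, by rw [hq],
        hrel, by ring⟩
  · -- unique fibre away from q±
    rintro q ⟨w, x, y, z, h, hq, hrel⟩ hqp hqm
    have hne : ¬ (w = 0 ∧ z = 0) := by
      rintro ⟨rfl, rfl⟩
      rcases zero_case x y h (by linear_combination -hrel) with h' | h'
      · exact hqp (hq.trans h')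
      · exact hqm (hq.trans h')
    have hwz : (![w, z] : Fin 2 → ℂ) ≠ 0 := by rw [vec2_ne_zero]; tauto
    constructor
    · refine ⟨Projectivization.mk ℂ ![w, z] hwz,
        ⟨w, x, y, z, w, z, h, hwz, by rw [hq], hrel, by ring⟩, ?_⟩
      rintro r ⟨w', x', y', z', u, v, h1, h2, hP, hrel', huv⟩
      have hq' : q = Projectivization.mk ℂ ![w', x', y', z'] h1 := by
        have := congrArg Prod.fst hP; simpa using this
      have hr : r = Projectivization.mk ℂ ![u, v] h2 := by
        have := congrArg Prod.snd hP; simpa using this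
      obtain ⟨a, ha⟩ := (mk_eq_mk_iff' ℂ _ _ h1 h).1 (hq'.symm.trans hq)
      obtain ⟨haw, hax, hay, haz⟩ := vec4_smul_eq ha
      have hane : a ≠ 0 := by
        rintro rfl
        apply h1
        rw [← haw, ← hax, ← hay, ← haz]
        ext i; fin_cases i <;> simp
      have key : u * z = v * w := by
        have : a * (u * z) = a * (v * w) := by
          rw [← haw, ← haz] at huv; linear_combination huv
        exact mul_left_cancel₀ hane this
      rw [hr]
      exact collin u v w z h2 hwz key
    · rintro w' x' y' z' h' hwz' hq'
      obtain ⟨a, ha⟩ := (mk_eq_mk_iff' ℂ _ _ h h').1 (hq.symm.trans hq')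
      obtain ⟨haw, hax, hay, haz⟩ := vec4_smul_eq ha
      have hane : a ≠ 0 := by
        rintro rfl
        apply h
        rw [← haw, ← hax, ← hay, ← haz]
        ext i; fin_cases i <;> simp
      have hrel' : w' * z' = x' ^ 2 + y' ^ 2 := by
        have h2 : a ^ 2 * (w' * z') = a ^ 2 * (x' ^ 2 + y' ^ 2) := by
          rw [← haw, ← hax, ← hay, ← haz] at hrel; linear_combination hrel
        exact mul_left_cancel₀ (pow_ne_zero 2 hane) h2
      exact ⟨w', x', y', z', w', z', h', hwz', by rw [hq'], hrel', by ring⟩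
  · exact ⟨Equiv.subtypeUnivEquiv fun r => fib_mem_qPlus r⟩
  · exact ⟨Equiv.subtypeUnivEquiv fun r => fib_mem_qMinus r⟩
end

section
/- Let Z₂ = {([w:x:y:z],[u:v]) ∈ ℙ³(ℂ)×ℙ¹(ℂ) : wz = x²+y², uz = vw} and let π: Z₂ → ℙ¹(ℂ) be the projection ([w:x:y:z],[u:v]) ↦ [u:v]. For every [u:v] ∈ ℙ¹(ℂ) with uv ≠ 0, the fibre π⁻¹([u:v]) is in bijection with ℙ¹(ℂ) (it is a smooth conic), while each of the two fibres π⁻¹([1:0]) and π⁻¹([0:1]) is the union of two distinct projective lines meeting in exactly one point. -/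
/-- A projective line in `ℙ³(ℂ)`: the set of points whose representative lines are contained
in a fixed `2`-dimensional linear subspace of `ℂ⁴`. -/
def IsLine (L : Set (Projectivization ℂ (Fin 4 → ℂ))) : Prop :=
  ∃ W : Submodule ℂ (Fin 4 → ℂ), Module.finrank ℂ W = 2 ∧
    L = {p | p.submodule ≤ W}



open Projectivization Complex

lemma vne4 {w x y z : ℂ} : (![w, x, y, z] : Fin 4 → ℂ) ≠ 0 ↔ ¬(w = 0 ∧ x = 0 ∧ y = 0 ∧ z = 0) := by
  rw [Ne, funext_iff]
  simp [Fin.forall_fin_succ]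

lemma vne2 {u v : ℂ} : (![u, v] : Fin 2 → ℂ) ≠ 0 ↔ ¬(u = 0 ∧ v = 0) := by
  rw [Ne, funext_iff]
  simp [Fin.forall_fin_succ]

lemma mem_span₁ (c : ℂ) (v : Fin 4 → ℂ) :
    v ∈ Submodule.span ℂ {![1,0,0,0], ![0,c,1,0]} ↔ v 1 = c * v 2 ∧ v 3 = 0 := by
  rw [Submodule.mem_span_pair]
  constructor
  · rintro ⟨s, t, rfl⟩
    constructor <;> simp <;> ring
  · rintro ⟨h1, h3⟩
    exact ⟨v 0, v 2, by funext i; fin_cases i <;> simp [h1, h3, mul_comm]⟩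

lemma mem_span₂ (c : ℂ) (v : Fin 4 → ℂ) :
    v ∈ Submodule.span ℂ {![0,0,0,1], ![0,c,1,0]} ↔ v 1 = c * v 2 ∧ v 0 = 0 := by
  rw [Submodule.mem_span_pair]
  constructor
  · rintro ⟨s, t, rfl⟩
    constructor <;> simp <;> ring
  · rintro ⟨h1, h0⟩
    exact ⟨v 3, v 2, by funext i; fin_cases i <;> simp [h1, h0, mul_comm]⟩

lemma rank2 (a b : Fin 4 → ℂ) (h : LinearIndependent ℂ ![a, b]) :
    Module.finrank ℂ (Submodule.span ℂ {a, b}) = 2 := by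
  have := finrank_span_eq_card h
  have hr : Set.range ![a, b] = {a, b} := by
    ext x; simp [Fin.exists_fin_two, or_comm]
  rw [hr] at this
  simpa using this

lemma li₁ (c : ℂ) : LinearIndependent ℂ ![(![1,0,0,0] : Fin 4 → ℂ), ![0,c,1,0]] := by
  rw [LinearIndependent.pair_iff]
  intro s t hst
  constructor
  · have := congrFun hst 0; simpa using this
  · have := congrFun hst 2; simpa using this

lemma li₂ (c : ℂ) : LinearIndependent ℂ ![(![0,0,0,1] : Fin 4 → ℂ), ![0,c,1,0]] := by
  rw [LinearIndependent.pair_iff]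
  intro s t hst
  constructor
  · have := congrFun hst 3; simpa using this
  · have := congrFun hst 2; simpa using this


/-- Membership in a fibre of the projection. -/
lemma mem_fiber {u v : ℂ} (h2 : (![u, v] : Fin 2 → ℂ) ≠ 0)
    (q : Projectivization ℂ (Fin 4 → ℂ)) :
    (q, Projectivization.mk ℂ ![u, v] h2) ∈ Z2C ↔
    ∃ (w x y z : ℂ) (h1 : (![w, x, y, z] : Fin 4 → ℂ) ≠ 0),
      q = Projectivization.mk ℂ ![w, x, y, z] h1 ∧ w * z = x ^ 2 + y ^ 2 ∧ u * z = v * w := by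
  simp only [Z2C, Set.mem_setOf_eq]
  constructor
  · rintro ⟨w, x, y, z, u', v', h1, h2', hP, e1, e2⟩
    rw [Prod.ext_iff] at hP
    obtain ⟨hq, hm⟩ := hP
    simp only at hq hm
    rw [Projectivization.mk_eq_mk_iff] at hm
    obtain ⟨a, ha⟩ := hm
    have hu : (a : ℂ) * u' = u := by have := congrFun ha 0; simpa [Units.smul_def] using this
    have hv : (a : ℂ) * v' = v := by have := congrFun ha 1; simpa [Units.smul_def] using this
    refine ⟨w, x, y, z, h1, hq, e1, ?_⟩
    linear_combination -z * hu + w * hv + (a : ℂ) * e2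
  · rintro ⟨w, x, y, z, h1, rfl, e1, e2⟩
    exact ⟨w, x, y, z, u, v, h1, h2, rfl, e1, e2⟩

lemma part2 (h : (![1, 0] : Fin 2 → ℂ) ≠ 0) :
    ∃ L₁ L₂ : Set (Projectivization ℂ (Fin 4 → ℂ)), IsLine L₁ ∧ IsLine L₂ ∧ L₁ ≠ L₂ ∧
      {q | (q, Projectivization.mk ℂ ![1, 0] h) ∈ Z2C} = L₁ ∪ L₂ ∧
      (∃! q, q ∈ L₁ ∩ L₂) := by
  set W₁ : Submodule ℂ (Fin 4 → ℂ) := Submodule.span ℂ {![1,0,0,0], ![0,Complex.I,1,0]} with hW₁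
  set W₂ : Submodule ℂ (Fin 4 → ℂ) := Submodule.span ℂ {![1,0,0,0], ![0,-Complex.I,1,0]} with hW₂
  refine ⟨{p | p.submodule ≤ W₁}, {p | p.submodule ≤ W₂},
    ⟨W₁, rank2 _ _ (li₁ Complex.I), rfl⟩, ⟨W₂, rank2 _ _ (li₁ (-Complex.I)), rfl⟩, ?_, ?_, ?_⟩
  · -- L₁ ≠ L₂
    intro hL
    have hne : (![0, Complex.I, 1, 0] : Fin 4 → ℂ) ≠ 0 := by rw [vne4]; simp
    have h1 : Projectivization.mk ℂ ![0, Complex.I, 1, 0] hne ∈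
        {p : Projectivization ℂ (Fin 4 → ℂ) | p.submodule ≤ W₁} := by
      simp only [Set.mem_setOf_eq, Projectivization.submodule_mk,
        Submodule.span_singleton_le_iff_mem, hW₁, mem_span₁]
      simp
    rw [hL] at h1
    simp only [Set.mem_setOf_eq, Projectivization.submodule_mk,
      Submodule.span_singleton_le_iff_mem, hW₂, mem_span₂, mem_span₁] at h1
    have : Complex.I = -Complex.I := by simpa using h1.1
    have : (2 : ℂ) * Complex.I = 0 := by linear_combination this
    simp [Complex.I_ne_zero] at this
  · -- fibre = L₁ ∪ L₂
    ext q
    induction' q using Projectivization.ind with p hp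
    rw [Set.mem_setOf_eq, mem_fiber h]
    constructor
    · rintro ⟨w, x, y, z, h1, heq, e1, e2⟩
      have hz : z = 0 := by linear_combination e2
      have hs : x ^ 2 + y ^ 2 = 0 := by linear_combination w * hz - e1
      have hf : (x - Complex.I * y) * (x + Complex.I * y) = 0 := by
        linear_combination hs - y ^ 2 * Complex.I_sq
      rcases mul_eq_zero.mp hf with hc | hc
      · left
        rw [Set.mem_setOf_eq, heq, Projectivization.submodule_mk,
          Submodule.span_singleton_le_iff_mem, hW₁, mem_span₁]
        constructor
        · show x = Complex.I * y; linear_combination hc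
        · exact hz
      · right
        rw [Set.mem_setOf_eq, heq, Projectivization.submodule_mk,
          Submodule.span_singleton_le_iff_mem, hW₂, mem_span₁]
        constructor
        · show x = -Complex.I * y; linear_combination hc
        · exact hz
    · have hp4 : (![p 0, p 1, p 2, p 3] : Fin 4 → ℂ) = p := by
        funext i; fin_cases i <;> rfl
      rintro (hm | hm) <;>
        rw [Set.mem_setOf_eq, Projectivization.submodule_mk,
          Submodule.span_singleton_le_iff_mem, mem_span₁] at hm
      · refine ⟨p 0, p 1, p 2, p 3, hp4 ▸ hp, ?_, ?_, ?_⟩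
        · rw [Projectivization.mk_eq_mk_iff]; exact ⟨1, by simp [hp4]⟩
        · linear_combination p 0 * hm.2 - (p 1 + Complex.I * p 2) * hm.1
            - (p 2) ^ 2 * Complex.I_sq
        · rw [hm.2]; ring
      · refine ⟨p 0, p 1, p 2, p 3, hp4 ▸ hp, ?_, ?_, ?_⟩
        · rw [Projectivization.mk_eq_mk_iff]; exact ⟨1, by simp [hp4]⟩
        · linear_combination p 0 * hm.2 - (p 1 - Complex.I * p 2) * hm.1
            - (p 2) ^ 2 * Complex.I_sq
        · rw [hm.2]; ring
  · -- unique intersection point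
    have h10 : (![1, 0, 0, 0] : Fin 4 → ℂ) ≠ 0 := by rw [vne4]; simp
    refine ⟨Projectivization.mk ℂ ![1,0,0,0] h10, ⟨?_, ?_⟩, ?_⟩
    · simp only [Set.mem_setOf_eq, Projectivization.submodule_mk,
        Submodule.span_singleton_le_iff_mem, hW₁, mem_span₁]; simp
    · simp only [Set.mem_setOf_eq, Projectivization.submodule_mk,
        Submodule.span_singleton_le_iff_mem, hW₂, mem_span₁]; simp
    · intro q
      induction' q using Projectivization.ind with p hp
      rintro ⟨hq1, hq2⟩
      rw [Set.mem_setOf_eq, Projectivization.submodule_mk,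
        Submodule.span_singleton_le_iff_mem, mem_span₁] at hq1 hq2
      have h2' : p 2 = 0 := by
        have h2I : (2 * Complex.I) * p 2 = 0 := by linear_combination hq2.1 - hq1.1
        rcases mul_eq_zero.mp h2I with hc | hc
        · exact absurd hc (by simp [Complex.I_ne_zero])
        · exact hc
      have h1' : p 1 = 0 := by rw [hq1.1, h2', mul_zero]
      rw [Projectivization.mk_eq_mk_iff']
      exact ⟨p 0, by funext i; fin_cases i <;> simp [h1', h2', hq1.2]⟩

lemma part3 (h : (![0, 1] : Fin 2 → ℂ) ≠ 0) :
    ∃ L₁ L₂ : Set (Projectivization ℂ (Fin 4 → ℂ)), IsLine L₁ ∧ IsLine L₂ ∧ L₁ ≠ L₂ ∧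
      {q | (q, Projectivization.mk ℂ ![0, 1] h) ∈ Z2C} = L₁ ∪ L₂ ∧
      (∃! q, q ∈ L₁ ∩ L₂) := by
  set W₁ : Submodule ℂ (Fin 4 → ℂ) := Submodule.span ℂ {![0,0,0,1], ![0,Complex.I,1,0]} with hW₁
  set W₂ : Submodule ℂ (Fin 4 → ℂ) := Submodule.span ℂ {![0,0,0,1], ![0,-Complex.I,1,0]} with hW₂
  refine ⟨{p | p.submodule ≤ W₁}, {p | p.submodule ≤ W₂},
    ⟨W₁, rank2 _ _ (li₂ Complex.I), rfl⟩, ⟨W₂, rank2 _ _ (li₂ (-Complex.I)), rfl⟩, ?_, ?_, ?_⟩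
  · intro hL
    have hne : (![0, Complex.I, 1, 0] : Fin 4 → ℂ) ≠ 0 := by rw [vne4]; simp
    have h1 : Projectivization.mk ℂ ![0, Complex.I, 1, 0] hne ∈
        {p : Projectivization ℂ (Fin 4 → ℂ) | p.submodule ≤ W₁} := by
      simp only [Set.mem_setOf_eq, Projectivization.submodule_mk,
        Submodule.span_singleton_le_iff_mem, hW₁, mem_span₂]
      simp
    rw [hL] at h1
    simp only [Set.mem_setOf_eq, Projectivization.submodule_mk,
      Submodule.span_singleton_le_iff_mem, hW₂, mem_span₂] at h1
    have : Complex.I = -Complex.I := by simpa using h1.1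
    have : (2 : ℂ) * Complex.I = 0 := by linear_combination this
    simp [Complex.I_ne_zero] at this
  · ext q
    induction' q using Projectivization.ind with p hp
    rw [Set.mem_setOf_eq, mem_fiber h]
    constructor
    · rintro ⟨w, x, y, z, h1, heq, e1, e2⟩
      have hw : w = 0 := by linear_combination -e2
      have hs : x ^ 2 + y ^ 2 = 0 := by linear_combination z * hw - e1
      have hf : (x - Complex.I * y) * (x + Complex.I * y) = 0 := by
        linear_combination hs - y ^ 2 * Complex.I_sq
      rcases mul_eq_zero.mp hf with hc | hc
      · left
        rw [Set.mem_setOf_eq, heq, Projectivization.submodule_mk,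
          Submodule.span_singleton_le_iff_mem, hW₁, mem_span₂]
        constructor
        · show x = Complex.I * y; linear_combination hc
        · exact hw
      · right
        rw [Set.mem_setOf_eq, heq, Projectivization.submodule_mk,
          Submodule.span_singleton_le_iff_mem, hW₂, mem_span₂]
        constructor
        · show x = -Complex.I * y; linear_combination hc
        · exact hw
    · have hp4 : (![p 0, p 1, p 2, p 3] : Fin 4 → ℂ) = p := by
        funext i; fin_cases i <;> rfl
      rintro (hm | hm) <;>
        rw [Set.mem_setOf_eq, Projectivization.submodule_mk,
          Submodule.span_singleton_le_iff_mem, mem_span₂] at hm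
      · refine ⟨p 0, p 1, p 2, p 3, hp4 ▸ hp, ?_, ?_, ?_⟩
        · rw [Projectivization.mk_eq_mk_iff]; exact ⟨1, by simp [hp4]⟩
        · linear_combination p 3 * hm.2 - (p 1 + Complex.I * p 2) * hm.1
            - (p 2) ^ 2 * Complex.I_sq
        · rw [hm.2]; ring
      · refine ⟨p 0, p 1, p 2, p 3, hp4 ▸ hp, ?_, ?_, ?_⟩
        · rw [Projectivization.mk_eq_mk_iff]; exact ⟨1, by simp [hp4]⟩
        · linear_combination p 3 * hm.2 - (p 1 - Complex.I * p 2) * hm.1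
            - (p 2) ^ 2 * Complex.I_sq
        · rw [hm.2]; ring
  · have h01 : (![0, 0, 0, 1] : Fin 4 → ℂ) ≠ 0 := by rw [vne4]; simp
    refine ⟨Projectivization.mk ℂ ![0,0,0,1] h01, ⟨?_, ?_⟩, ?_⟩
    · simp only [Set.mem_setOf_eq, Projectivization.submodule_mk,
        Submodule.span_singleton_le_iff_mem, hW₁, mem_span₂]; simp
    · simp only [Set.mem_setOf_eq, Projectivization.submodule_mk,
        Submodule.span_singleton_le_iff_mem, hW₂, mem_span₂]; simp
    · intro q
      induction' q using Projectivization.ind with p hp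
      rintro ⟨hq1, hq2⟩
      rw [Set.mem_setOf_eq, Projectivization.submodule_mk,
        Submodule.span_singleton_le_iff_mem, mem_span₂] at hq1 hq2
      have h2' : p 2 = 0 := by
        have h2I : (2 * Complex.I) * p 2 = 0 := by linear_combination hq2.1 - hq1.1
        rcases mul_eq_zero.mp h2I with hc | hc
        · exact absurd hc (by simp [Complex.I_ne_zero])
        · exact hc
      have h1' : p 1 = 0 := by rw [hq1.1, h2', mul_zero]
      rw [Projectivization.mk_eq_mk_iff']
      exact ⟨p 3, by funext i; fin_cases i <;> simp [h1', h2', hq1.2]⟩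

/-- The quadratic parametrization of the smooth conic fibre. -/
noncomputable def Fp (u v : ℂ) (p : Fin 2 → ℂ) : Fin 4 → ℂ :=
  ![u * p 0 * p 1, (v * p 0 ^ 2 + u * p 1 ^ 2) / 2,
    (v * p 0 ^ 2 - u * p 1 ^ 2) * (-Complex.I) / 2, v * p 0 * p 1]

lemma pvec2 (p : Fin 2 → ℂ) (hp : p ≠ 0) : ¬(p 0 = 0 ∧ p 1 = 0) := by
  rintro ⟨a, b⟩
  exact hp (by funext i; fin_cases i <;> simpa)

lemma Fp_ne (u v : ℂ) (hu : u ≠ 0) (hv : v ≠ 0) (p : Fin 2 → ℂ) (hp : p ≠ 0) :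
    Fp u v p ≠ 0 := by
  rw [Fp, vne4]
  rintro ⟨c0, c1, _, _⟩
  have hsum : v * p 0 ^ 2 + u * p 1 ^ 2 = 0 :=
    (div_eq_zero_iff.mp c1).resolve_right two_ne_zero
  have hp' := pvec2 p hp
  by_cases h0 : p 0 = 0
  · have h1 : p 1 ≠ 0 := fun h1 => hp' ⟨h0, h1⟩
    rw [h0] at hsum
    simp only [mul_zero, zero_pow, zero_add, ne_eq, OfNat.ofNat_ne_zero,
      not_false_eq_true, mul_eq_zero, pow_eq_zero_iff] at hsum
    rcases hsum with h | h
    · exact hu h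
    · exact h1 h
  · by_cases h1 : p 1 = 0
    · rw [h1] at hsum
      simp only [mul_zero, zero_pow, add_zero, ne_eq, OfNat.ofNat_ne_zero,
        not_false_eq_true, mul_eq_zero, pow_eq_zero_iff] at hsum
      rcases hsum with h | h
      · exact hv h
      · exact h0 h
    · exact (mul_ne_zero (mul_ne_zero hu h0) h1) c0

lemma Fp_smul (u v a : ℂ) (p : Fin 2 → ℂ) : Fp u v (a • p) = (a ^ 2) • Fp u v p := by
  funext i
  fin_cases i <;> simp [Fp, Pi.smul_apply, smul_eq_mul] <;> ring

/-- The parametrization descends to projective spaces. -/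
noncomputable def fibMap (u v : ℂ) (hu : u ≠ 0) (hv : v ≠ 0) :
    Projectivization ℂ (Fin 2 → ℂ) → Projectivization ℂ (Fin 4 → ℂ) :=
  Quotient.lift (fun p => Projectivization.mk ℂ (Fp u v p.1) (Fp_ne u v hu hv p.1 p.2))
    (by
      intro a b h
      have hmk : Projectivization.mk ℂ a.1 a.2 = Projectivization.mk ℂ b.1 b.2 :=
        Quotient.sound' h
      rw [Projectivization.mk_eq_mk_iff] at hmk
      obtain ⟨c, hc⟩ := hmk
      rw [Units.smul_def] at hc
      rw [Projectivization.mk_eq_mk_iff]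
      refine ⟨c * c, ?_⟩
      have h2 := Fp_smul u v (c : ℂ) b.1
      rw [hc] at h2
      rw [h2, Units.smul_def, Units.val_mul, pow_two, mul_smul])


lemma fibMap_mk (u v : ℂ) (hu : u ≠ 0) (hv : v ≠ 0) (p : Fin 2 → ℂ) (hp : p ≠ 0) :
    fibMap u v hu hv (Projectivization.mk ℂ p hp) =
      Projectivization.mk ℂ (Fp u v p) (Fp_ne u v hu hv p hp) := rfl

lemma fibMap_mem (u v : ℂ) (hu : u ≠ 0) (hv : v ≠ 0) (h2 : (![u, v] : Fin 2 → ℂ) ≠ 0)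
    (p : Projectivization ℂ (Fin 2 → ℂ)) :
    (fibMap u v hu hv p, Projectivization.mk ℂ ![u, v] h2) ∈ Z2C := by
  induction' p using Projectivization.ind with q hq
  rw [fibMap_mk, mem_fiber h2]
  refine ⟨u * q 0 * q 1, (v * q 0 ^ 2 + u * q 1 ^ 2) / 2,
    (v * q 0 ^ 2 - u * q 1 ^ 2) * (-Complex.I) / 2, v * q 0 * q 1,
    Fp_ne u v hu hv q hq, rfl, ?_, by ring⟩
  linear_combination (-(v * q 0 ^ 2 - u * q 1 ^ 2) ^ 2 / 4) * Complex.I_sq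

lemma fibMap_inj (u v : ℂ) (hu : u ≠ 0) (hv : v ≠ 0) :
    Function.Injective (fibMap u v hu hv) := by
  intro p q
  induction' p using Projectivization.ind with s hs
  induction' q using Projectivization.ind with t ht
  intro hpq
  rw [fibMap_mk, fibMap_mk, Projectivization.mk_eq_mk_iff] at hpq
  obtain ⟨μ, hμ⟩ := hpq
  have e0 : (μ : ℂ) * (u * t 0 * t 1) = u * s 0 * s 1 := by
    have := congrFun hμ 0; simpa [Fp, Units.smul_def] using this
  have e1 : (μ : ℂ) * ((v * t 0 ^ 2 + u * t 1 ^ 2) / 2) = (v * s 0 ^ 2 + u * s 1 ^ 2) / 2 := by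
    have := congrFun hμ 1; simpa [Fp, Units.smul_def] using this
  have e2 : (μ : ℂ) * ((v * t 0 ^ 2 - u * t 1 ^ 2) * (-Complex.I) / 2) =
      (v * s 0 ^ 2 - u * s 1 ^ 2) * (-Complex.I) / 2 := by
    have := congrFun hμ 2; simpa [Fp, Units.smul_def] using this
  have hμ0 : (μ : ℂ) ≠ 0 := μ.ne_zero
  have hA : v * s 0 ^ 2 = (μ : ℂ) * (v * t 0 ^ 2) := by
    linear_combination -e1 - Complex.I * e2 +
      (((v * s 0 ^ 2 - u * s 1 ^ 2) - (μ : ℂ) * (v * t 0 ^ 2 - u * t 1 ^ 2)) / 2) * Complex.I_sq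
  have hB : u * s 1 ^ 2 = (μ : ℂ) * (u * t 1 ^ 2) := by
    linear_combination -e1 + Complex.I * e2 -
      (((v * s 0 ^ 2 - u * s 1 ^ 2) - (μ : ℂ) * (v * t 0 ^ 2 - u * t 1 ^ 2)) / 2) * Complex.I_sq
  have hA' : s 0 ^ 2 = (μ : ℂ) * t 0 ^ 2 := by
    apply mul_left_cancel₀ hv; linear_combination hA
  have hB' : s 1 ^ 2 = (μ : ℂ) * t 1 ^ 2 := by
    apply mul_left_cancel₀ hu; linear_combination hB
  have h00 : s 0 * s 1 = (μ : ℂ) * (t 0 * t 1) := by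
    apply mul_left_cancel₀ hu; linear_combination -e0
  rw [Projectivization.mk_eq_mk_iff']
  by_cases ht0 : t 0 = 0
  · have ht1 : t 1 ≠ 0 := fun h => pvec2 t ht ⟨ht0, h⟩
    have hs0 : s 0 = 0 := by
      have : s 0 ^ 2 = 0 := by rw [hA', ht0]; ring
      exact pow_eq_zero_iff two_ne_zero |>.mp this
    have hs1 : s 1 ≠ 0 := fun h => pvec2 s hs ⟨hs0, h⟩
    refine ⟨s 1 / t 1, ?_⟩
    funext i; fin_cases i
    · show s 1 / t 1 * t 0 = s 0
      rw [ht0, hs0, mul_zero]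
    · show s 1 / t 1 * t 1 = s 1
      field_simp
  · have hs0 : s 0 ≠ 0 := by
      intro h
      have : (μ : ℂ) * t 0 ^ 2 = 0 := by rw [← hA', h]; ring
      rcases mul_eq_zero.mp this with h' | h'
      · exact hμ0 h'
      · exact ht0 (pow_eq_zero_iff two_ne_zero |>.mp h')
    refine ⟨s 0 / t 0, ?_⟩
    have key : s 0 * (s 0 * t 1 - s 1 * t 0) = 0 := by
      linear_combination t 1 * hA' - t 0 * h00
    have key' : s 0 * t 1 - s 1 * t 0 = 0 := (mul_eq_zero.mp key).resolve_left hs0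
    funext i; fin_cases i
    · show s 0 / t 0 * t 0 = s 0
      field_simp
    · show s 0 / t 0 * t 1 = s 1
      field_simp
      linear_combination key'

lemma fibMap_surj (u v : ℂ) (hu : u ≠ 0) (hv : v ≠ 0) (h2 : (![u, v] : Fin 2 → ℂ) ≠ 0)
    (q : Projectivization ℂ (Fin 4 → ℂ))
    (hq : (q, Projectivization.mk ℂ ![u, v] h2) ∈ Z2C) :
    ∃ p, fibMap u v hu hv p = q := by
  rw [mem_fiber h2] at hq
  obtain ⟨w, x, y, z, h1, rfl, e1, e2⟩ := hq
  have key : ∃ s t l : ℂ, l ≠ 0 ∧ (s ≠ 0 ∨ t ≠ 0) ∧ u * s * t = l * w ∧ v * s * t = l * z ∧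
      v * s ^ 2 = l * (x + Complex.I * y) ∧ u * t ^ 2 = l * (x - Complex.I * y) := by
    by_cases hB : x - Complex.I * y = 0
    · -- B = 0 : degenerate for this chart; then A ≠ 0, w = z = 0
      have hxy : x ^ 2 + y ^ 2 = 0 := by
        linear_combination (x + Complex.I * y) * hB + y ^ 2 * Complex.I_sq
      have hwz : w = 0 ∧ z = 0 := by
        have h0 : w * z = 0 := by rw [e1, hxy]
        rcases mul_eq_zero.mp h0 with h | h
        · refine ⟨h, ?_⟩
          have : u * z = 0 := by rw [e2, h, mul_zero]
          exact (mul_eq_zero.mp this).resolve_left hu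
        · refine ⟨?_, h⟩
          have : v * w = 0 := by rw [← e2, h, mul_zero]
          exact (mul_eq_zero.mp this).resolve_left hv
      have hA : x + Complex.I * y ≠ 0 := by
        intro hA0
        have hx : x = 0 := by
          have h2x : (2 : ℂ) * x = 0 := by linear_combination hA0 + hB
          exact (mul_eq_zero.mp h2x).resolve_left two_ne_zero
        have hy : y = 0 := by
          have h2y : (2 * Complex.I) * y = 0 := by linear_combination hA0 - hB
          exact (mul_eq_zero.mp h2y).resolve_left
            (mul_ne_zero two_ne_zero Complex.I_ne_zero)
        exact (vne4.mp h1) ⟨hwz.1, hx, hy, hwz.2⟩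
      refine ⟨x + Complex.I * y, 0, v * (x + Complex.I * y), mul_ne_zero hv hA,
        Or.inl hA, ?_, ?_, by ring, ?_⟩
      · rw [hwz.1]; ring
      · rw [hwz.2]
      · linear_combination -(v * (x + Complex.I * y)) * hB
    · -- B ≠ 0 : take s = w, t = B, l = u * B
      refine ⟨w, x - Complex.I * y, u * (x - Complex.I * y), mul_ne_zero hu hB,
        Or.inr hB, by ring, ?_, ?_, by ring⟩
      · linear_combination -(x - Complex.I * y) * e2
      · linear_combination u * e1 - w * e2 + u * y ^ 2 * Complex.I_sq
  obtain ⟨s, t, l, hl, hst, hw, hz, hvA, huB⟩ := key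
  have hstv : (![s, t] : Fin 2 → ℂ) ≠ 0 := by
    rw [vne2]; rintro ⟨a, b⟩
    rcases hst with h | h
    · exact h a
    · exact h b
  refine ⟨Projectivization.mk ℂ ![s, t] hstv, ?_⟩
  rw [fibMap_mk, Projectivization.mk_eq_mk_iff]
  refine ⟨Units.mk0 l hl, ?_⟩
  funext i
  fin_cases i <;> simp [Fp, Units.smul_def]
  · linear_combination -hw
  · linear_combination (-1/2 : ℂ) * hvA - (1/2 : ℂ) * huB
  · linear_combination (Complex.I / 2) * hvA - (Complex.I / 2) * huB + l * y * Complex.I_sq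
  · linear_combination -hz

lemma part1 (u v : ℂ) (h2 : (![u, v] : Fin 2 → ℂ) ≠ 0) (huv : u * v ≠ 0) :
    Nonempty ({q : Projectivization ℂ (Fin 4 → ℂ) |
      (q, Projectivization.mk ℂ ![u, v] h2) ∈ Z2C} ≃ Projectivization ℂ (Fin 2 → ℂ)) := by
  have hu : u ≠ 0 := left_ne_zero_of_mul huv
  have hv : v ≠ 0 := right_ne_zero_of_mul huv
  refine ⟨(Equiv.ofBijective
    (fun p => (⟨fibMap u v hu hv p, fibMap_mem u v hu hv h2 p⟩ :
      {q : Projectivization ℂ (Fin 4 → ℂ) | (q, Projectivization.mk ℂ ![u, v] h2) ∈ Z2C}))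
    ⟨?_, ?_⟩).symm⟩
  · intro p q hpq
    exact fibMap_inj u v hu hv (congrArg Subtype.val hpq)
  · rintro ⟨q, hq⟩
    obtain ⟨p, hp⟩ := fibMap_surj u v hu hv h2 q hq
    exact ⟨p, Subtype.ext hp⟩

/-- For the projection `π : Z₂ → ℙ¹`, `([w:x:y:z],[u:v]) ↦ [u:v]`: every fibre over a point
`[u:v]` with `uv ≠ 0` is in bijection with `ℙ¹(ℂ)`, while each of the two fibres over `[1:0]`
and `[0:1]` is the union of two distinct projective lines meeting in exactly one point. -/
theorem stmt_15 :
    (∀ (u v : ℂ) (h2 : (![u, v] : Fin 2 → ℂ) ≠ 0), u * v ≠ 0 →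
      Nonempty ({q : Projectivization ℂ (Fin 4 → ℂ) |
        (q, Projectivization.mk ℂ ![u, v] h2) ∈ Z2C} ≃ Projectivization ℂ (Fin 2 → ℂ))) ∧
    (∀ h : (![1, 0] : Fin 2 → ℂ) ≠ 0,
      ∃ L₁ L₂ : Set (Projectivization ℂ (Fin 4 → ℂ)), IsLine L₁ ∧ IsLine L₂ ∧ L₁ ≠ L₂ ∧
        {q | (q, Projectivization.mk ℂ ![1, 0] h) ∈ Z2C} = L₁ ∪ L₂ ∧
        (∃! q, q ∈ L₁ ∩ L₂)) ∧
    (∀ h : (![0, 1] : Fin 2 → ℂ) ≠ 0,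
      ∃ L₁ L₂ : Set (Projectivization ℂ (Fin 4 → ℂ)), IsLine L₁ ∧ IsLine L₂ ∧ L₁ ≠ L₂ ∧
        {q | (q, Projectivization.mk ℂ ![0, 1] h) ∈ Z2C} = L₁ ∪ L₂ ∧
        (∃! q, q ∈ L₁ ∩ L₂)) := by
  exact ⟨part1, part2, part3⟩
end
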